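/- arXiv:2302.11847 — 9 statements merged into one kernel-verified Lean document; each statement's English description precedes it below -/
import Mathlib

section
/- Suppose H : 𝒫(ℝ^d) → [0,∞] is monotone and finitely subadditive. If (f_n) is a sequence of nonnegative functions on ℝ^d converging quasi-uniformly to f, then ∫f dH ≤ liminf_{n→∞} ∫f_n dH. -/
open MeasureTheory Filter Set Topology
open scoped ENNReal

/-- The Choquet integral `∫ f dH = ∫₀^∞ H({f > t}) dt` of `f : α → [0,∞]`
with respect to a set function `H`. -/
noncomputable def choquet {α : Type*} (H : Set α → ℝ≥0∞) (f : α → ℝ≥0∞) : ℝ≥0∞ :=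
  ∫⁻ t in Set.Ioi (0 : ℝ), H {x | ENNReal.ofReal t < f x}

/-- A set function is monotone if `E ⊆ F` implies `H E ≤ H F`. -/
def MonotoneSF {α : Type*} (H : Set α → ℝ≥0∞) : Prop :=
  ∀ ⦃E F : Set α⦄, E ⊆ F → H E ≤ H F

/-- Strong subadditivity: `H(E ∩ F) + H(E ∪ F) ≤ H(E) + H(F)`. -/
def StronglySubadditive {α : Type*} (H : Set α → ℝ≥0∞) : Prop :=
  ∀ E F : Set α, H (E ∩ F) + H (E ∪ F) ≤ H E + H F

def FinitelySubadditive {α : Type*} (H : Set α → ℝ≥0∞) : Prop :=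
  ∀ E F : Set α, H (E ∪ F) ≤ H E + H F

def CountablySubadditive {α : Type*} (H : Set α → ℝ≥0∞) : Prop :=
  ∀ E : ℕ → Set α, H (⋃ n, E n) ≤ ∑' n, H (E n)

/-- Quasi-uniform convergence of a sequence of real-valued functions:
for every `ε > 0` there is a set `E` with `H E ≤ ε` such that the sequence
converges uniformly on the complement of `E`. -/
def QUTendsto {α : Type*} (H : Set α → ℝ≥0∞) (f : ℕ → α → ℝ) (g : α → ℝ) : Prop :=
  ∀ ε : ℝ, 0 < ε → ∃ E : Set α, H E ≤ ENNReal.ofReal ε ∧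
    TendstoUniformlyOn f g Filter.atTop Eᶜ

/-- Quasi-uniform convergence of a sequence of `[0,∞]`-valued functions: for every
`ε > 0` there is a set `E` with `H E ≤ ε` such that the functions are finite on the
complement of `E` and converge uniformly to `g` there. -/
def QUTendstoENN {α : Type*} (H : Set α → ℝ≥0∞) (f : ℕ → α → ℝ≥0∞) (g : α → ℝ≥0∞) : Prop :=
  ∀ ε : ℝ, 0 < ε → ∃ E : Set α, H E ≤ ENNReal.ofReal ε ∧
    (∀ n, ∀ x ∉ E, f n x ≠ ⊤) ∧ (∀ x ∉ E, g x ≠ ⊤) ∧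
    TendstoUniformlyOn (fun n x => (f n x).toReal) (fun x => (g x).toReal) Filter.atTop Eᶜ

/-- A function `f : α → [-∞,∞]` is quasicontinuous with respect to `H` if for every
`ε > 0` there is an open set `ω` with `H ω ≤ ε` such that `f` is finite and continuous
on the complement of `ω`. -/
def QuasicontinuousE {α : Type*} [TopologicalSpace α] (H : Set α → ℝ≥0∞) (f : α → EReal) : Prop :=
  ∀ ε : ℝ, 0 < ε → ∃ ω : Set α, IsOpen ω ∧ H ω ≤ ENNReal.ofReal ε ∧
    (∀ x ∉ ω, f x ≠ ⊤ ∧ f x ≠ ⊥) ∧ ContinuousOn f ωᶜ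

/-- Quasicontinuity of a real-valued function. -/
def QuasicontinuousR {α : Type*} [TopologicalSpace α] (H : Set α → ℝ≥0∞) (f : α → ℝ) : Prop :=
  ∀ ε : ℝ, 0 < ε → ∃ ω : Set α, IsOpen ω ∧ H ω ≤ ENNReal.ofReal ε ∧ ContinuousOn f ωᶜ

/-- Quasicontinuity of a `[0,∞]`-valued function: finite and continuous off an open
set of small capacity. -/
def QuasicontinuousENN {α : Type*} [TopologicalSpace α] (H : Set α → ℝ≥0∞) (f : α → ℝ≥0∞) :
    Prop :=
  ∀ ε : ℝ, 0 < ε → ∃ ω : Set α, IsOpen ω ∧ H ω ≤ ENNReal.ofReal ε ∧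
    (∀ x ∉ ω, f x ≠ ⊤) ∧ ContinuousOn f ωᶜ

/-- Evanescence: for every open `U` with `H U < ∞` and every closed `F ⊆ U`,
`H(F \ B_r) → 0` as `r → ∞`. -/
def Evanescent {d : ℕ} (H : Set (EuclideanSpace ℝ (Fin d)) → ℝ≥0∞) : Prop :=
  ∀ U : Set (EuclideanSpace ℝ (Fin d)), IsOpen U → H U < ⊤ →
    ∀ F : Set (EuclideanSpace ℝ (Fin d)), IsClosed F → F ⊆ U →
      Filter.Tendsto (fun r : ℝ => H (F \ Metric.ball 0 r)) Filter.atTop (nhds 0)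

/-- Semifiniteness: every open set of infinite capacity contains subsets of
arbitrarily large finite capacity. -/
def SemifiniteSF {α : Type*} [TopologicalSpace α] (H : Set α → ℝ≥0∞) : Prop :=
  ∀ U : Set α, IsOpen U → H U = ⊤ → ∀ M : ℝ, 0 ≤ M →
    ∃ E ⊆ U, ENNReal.ofReal M ≤ H E ∧ H E < ⊤

/-- The regularization `H̃(A) = sup { H(D) : D ⊆ A, H(D) < ∞ }`. -/
noncomputable def tildeSF {α : Type*} (H : Set α → ℝ≥0∞) (A : Set α) : ℝ≥0∞ :=
  ⨆ (D : Set α) (_ : D ⊆ A) (_ : H D < ⊤), H D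

/-- Fatou's lemma for quasi-uniform convergence. -/
theorem choquet_fatou_of_quasiUniform {d : ℕ}
    (H : Set (EuclideanSpace ℝ (Fin d)) → ℝ≥0∞)
    (hmono : MonotoneSF H) (hsub : FinitelySubadditive H)
    (f : ℕ → EuclideanSpace ℝ (Fin d) → ℝ≥0∞) (g : EuclideanSpace ℝ (Fin d) → ℝ≥0∞)
    (hqu : QUTendstoENN H f g) :
    choquet H g ≤ Filter.liminf (fun n => choquet H (f n)) Filter.atTop := by
  classical
  set L := Filter.liminf (fun n => choquet H (f n)) Filter.atTop with hL
  -- the distribution function of g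
  set φ : ℝ → ℝ≥0∞ := fun t => H {x | ENNReal.ofReal t < g x} with hφ
  have hφanti : Antitone φ := by
    intro a b hab
    exact hmono fun x hx => lt_of_le_of_lt (ENNReal.ofReal_le_ofReal hab) hx
  have hφmeas : Measurable φ := hφanti.measurable
  -- Key estimate on truncated integrals
  have key : ∀ δ : ℝ, 0 < δ → ∀ T : ℝ, 0 < T →
      (∫⁻ t in Set.Ioc δ (T + δ), φ t) ≤ L := by
    intro δ hδ T hT
    refine ENNReal.le_of_forall_pos_le_add fun ε' hε' hLtop => ?_
    set r : ℝ := (ε' : ℝ) / T with hr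
    have hr0 : 0 < r := div_pos (by exact_mod_cast hε') hT
    obtain ⟨E, hE, hffin, hgfin, hunif⟩ := hqu r hr0
    have hev := (Metric.tendstoUniformlyOn_iff.mp hunif) δ hδ
    have hTr : H E * ENNReal.ofReal T ≤ (ε' : ℝ≥0∞) := by
      calc H E * ENNReal.ofReal T ≤ ENNReal.ofReal r * ENNReal.ofReal T :=
            mul_le_mul_left hE _
        _ = ENNReal.ofReal (r * T) := (ENNReal.ofReal_mul hr0.le).symm
        _ = (ε' : ℝ≥0∞) := by
            rw [hr, div_mul_cancel₀ _ hT.ne']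
            simp [ENNReal.ofReal_coe_nnreal]
    have hev2 : ∀ᶠ n in Filter.atTop,
        (∫⁻ t in Set.Ioc δ (T + δ), φ t) - (ε' : ℝ≥0∞) ≤ choquet H (f n) := by
      filter_upwards [hev] with n hn
      rw [tsub_le_iff_right]
      set ψ : ℝ → ℝ≥0∞ := fun s => H {x | ENNReal.ofReal s < f n x} with hψ
      have hψanti : Antitone ψ := by
        intro a b hab
        exact hmono fun x hx => lt_of_le_of_lt (ENNReal.ofReal_le_ofReal hab) hx
      have hψmeas : Measurable ψ := hψanti.measurable
      -- pointwise bound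
      have hpt : ∀ t ∈ Set.Ioc δ (T + δ), φ t ≤ ψ (t - δ) + H E := by
        intro t ht
        have hsubset : {x | ENNReal.ofReal t < g x} ⊆
            {x | ENNReal.ofReal (t - δ) < f n x} ∪ E := by
          intro x hx
          by_cases hxE : x ∈ E
          · exact Or.inr hxE
          · left
            have hg := hgfin x hxE
            have hf := hffin n x hxE
            have ht0 : 0 < t := hδ.trans ht.1
            have h1 : t < (g x).toReal :=
              (ENNReal.ofReal_lt_iff_lt_toReal ht0.le hg).mp hx
            have h2 : dist (g x).toReal ((f n x).toReal) < δ := hn x hxE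
            rw [Real.dist_eq, abs_sub_lt_iff] at h2
            have h3 : t - δ < (f n x).toReal := by linarith [h2.1]
            exact (ENNReal.ofReal_lt_iff_lt_toReal (by linarith [ht.1] : (0:ℝ) ≤ t - δ)
              hf).mpr h3
        calc φ t ≤ H ({x | ENNReal.ofReal (t - δ) < f n x} ∪ E) := hmono hsubset
          _ ≤ ψ (t - δ) + H E := hsub _ _
      -- translation identity
      have htrans : (∫⁻ t in Set.Ioc δ (T + δ), ψ (t - δ)) =
          ∫⁻ s in Set.Ioc 0 T, ψ s := by
        rw [← MeasureTheory.lintegral_indicator measurableSet_Ioc _,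
            ← MeasureTheory.lintegral_indicator measurableSet_Ioc _]
        have hind : ∀ t : ℝ, (Set.Ioc δ (T + δ)).indicator (fun t => ψ (t - δ)) t =
            (Set.Ioc 0 T).indicator ψ (t + -δ) := by
          intro t
          by_cases h : t ∈ Set.Ioc δ (T + δ)
          · rw [Set.indicator_of_mem h, Set.indicator_of_mem]
            · ring_nf
            · obtain ⟨h1, h2⟩ := h
              constructor <;> [linarith; linarith]
          · rw [Set.indicator_of_notMem h, Set.indicator_of_notMem]
            intro hc
            obtain ⟨h1, h2⟩ := hc
            exact h ⟨by linarith, by linarith⟩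
        simp_rw [hind]
        exact MeasureTheory.lintegral_add_right_eq_self
          ((Set.Ioc (0:ℝ) T).indicator ψ) (-δ)
      calc (∫⁻ t in Set.Ioc δ (T + δ), φ t)
          ≤ ∫⁻ t in Set.Ioc δ (T + δ), (ψ (t - δ) + H E) :=
            MeasureTheory.setLIntegral_mono' measurableSet_Ioc hpt
        _ = (∫⁻ t in Set.Ioc δ (T + δ), ψ (t - δ)) +
              ∫⁻ _ in Set.Ioc δ (T + δ), H E :=
            MeasureTheory.lintegral_add_right _ measurable_const
        _ = (∫⁻ s in Set.Ioc 0 T, ψ s) + H E * volume (Set.Ioc δ (T + δ)) := by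
            rw [htrans, MeasureTheory.setLIntegral_const]
        _ ≤ choquet H (f n) + (ε' : ℝ≥0∞) := by
            gcongr
            · exact MeasureTheory.lintegral_mono_set Set.Ioc_subset_Ioi_self
            · calc H E * volume (Set.Ioc δ (T + δ))
                  = H E * ENNReal.ofReal T := by
                    rw [Real.volume_Ioc]; ring_nf
                _ ≤ (ε' : ℝ≥0∞) := hTr
    have := Filter.le_liminf_of_le (by isBoundedDefault) hev2
    calc (∫⁻ t in Set.Ioc δ (T + δ), φ t)
        ≤ ((∫⁻ t in Set.Ioc δ (T + δ), φ t) - (ε' : ℝ≥0∞)) + (ε' : ℝ≥0∞) :=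
          le_tsub_add
      _ ≤ L + (ε' : ℝ≥0∞) := by gcongr
  -- exhaust (0, ∞) by the intervals Ioc (1/(k+1)) ((k+1) + 1/(k+1))
  set s : ℕ → Set ℝ := fun k =>
    Set.Ioc (1 / (k + 1 : ℝ)) ((k + 1 : ℝ) + 1 / (k + 1 : ℝ)) with hs
  have hsmono : Monotone fun k => (s k).indicator φ := by
    intro a b hab t
    have h1 : (1 : ℝ) / (b + 1) ≤ 1 / (a + 1) := by
      apply one_div_le_one_div_of_le
      · positivity
      · exact_mod_cast by omega
    have h2 : (a + 1 : ℝ) + 1 / (a + 1) ≤ (b + 1 : ℝ) + 1 / (b + 1) := by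
      have hab' : (a : ℝ) ≤ b := by exact_mod_cast hab
      have hb1 : (1 : ℝ) / (b + 1) ≤ 1 := by
        rw [div_le_one (by positivity)]
        have : (0:ℝ) ≤ b := Nat.cast_nonneg b
        linarith
      have ha1 : (1 : ℝ) / (a + 1) ≤ 1 := by
        rw [div_le_one (by positivity)]
        have : (0:ℝ) ≤ a := Nat.cast_nonneg a
        linarith
      rcases eq_or_lt_of_le hab' with h | h
      · rw [h]
      · have : (a:ℝ) + 1 ≤ b := by
          have : (a:ℕ) + 1 ≤ b := by
            have : a < b := by exact_mod_cast h
            omega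
          exact_mod_cast this
        have h1ab : (0:ℝ) < 1 / (a + 1) := by positivity
        have hb0 : (0:ℝ) ≤ 1 / (b + 1) := by positivity
        linarith
    show (s a).indicator φ t ≤ (s b).indicator φ t
    by_cases ht : t ∈ s a
    · rw [Set.indicator_of_mem ht, Set.indicator_of_mem]
      exact ⟨lt_of_le_of_lt h1 ht.1, le_trans ht.2 h2⟩
    · rw [Set.indicator_of_notMem ht]
      exact zero_le
  have hcup : ∀ t ∈ Set.Ioi (0:ℝ), ∃ k, t ∈ s k := by
    intro t ht
    rw [Set.mem_Ioi] at ht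
    obtain ⟨n₁, hn₁⟩ := exists_nat_gt (1 / t)
    obtain ⟨n₂, hn₂⟩ := exists_nat_gt t
    refine ⟨n₁ + n₂, ?_, ?_⟩
    · have h1 : (1:ℝ) / t < (n₁ + n₂ : ℕ) + 1 := by
        push_cast
        have : (0:ℝ) ≤ n₂ := Nat.cast_nonneg n₂
        push_cast at hn₁
        linarith
      calc (1:ℝ) / ((n₁ + n₂ : ℕ) + 1) < 1 / (1 / t) := by
            apply one_div_lt_one_div_of_lt
            · positivity
            · exact h1
        _ = t := one_div_one_div t
    · have h2 : t ≤ (n₁ + n₂ : ℕ) + 1 := by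
        push_cast
        have : (0:ℝ) ≤ n₁ := Nat.cast_nonneg n₁
        push_cast at hn₂
        linarith
      have h3 : (0:ℝ) ≤ 1 / ((n₁ + n₂ : ℕ) + 1) := by positivity
      push_cast at h2 h3 ⊢
      linarith
  have hiSup : ∀ t : ℝ, (Set.Ioi (0:ℝ)).indicator φ t = ⨆ k, (s k).indicator φ t := by
    intro t
    by_cases ht : t ∈ Set.Ioi (0:ℝ)
    · rw [Set.indicator_of_mem ht]
      obtain ⟨k, hk⟩ := hcup t ht
      apply le_antisymm
      · exact le_trans (le_of_eq (Set.indicator_of_mem hk φ).symm) (le_iSup (fun k => (s k).indicator φ t) k)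
      · exact iSup_le fun k => Set.indicator_le_self _ _ _
    · rw [Set.indicator_of_notMem ht]
      symm
      rw [ENNReal.iSup_eq_zero]
      intro k
      rw [Set.indicator_apply_eq_zero]
      intro hk
      exact absurd (Set.mem_Ioi.mpr (lt_of_lt_of_le (by positivity) hk.1.le)) ht
  have hchoquet : choquet H g = ∫⁻ t, (Set.Ioi (0:ℝ)).indicator φ t :=
    (MeasureTheory.lintegral_indicator measurableSet_Ioi _).symm
  rw [hchoquet]
  calc (∫⁻ t, (Set.Ioi (0:ℝ)).indicator φ t)
      = ∫⁻ t, ⨆ k, (s k).indicator φ t := by simp_rw [hiSup]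
    _ = ⨆ k, ∫⁻ t, (s k).indicator φ t :=
        MeasureTheory.lintegral_iSup
          (fun k => hφmeas.indicator measurableSet_Ioc) hsmono
    _ ≤ L := by
        refine iSup_le fun k => ?_
        rw [MeasureTheory.lintegral_indicator measurableSet_Ioc _]
        exact key (1 / (k + 1 : ℝ)) (by positivity) (k + 1 : ℝ) (by positivity)
end

section
/- Suppose H : 𝒫(ℝ^d) → [0,∞] is monotone and finitely subadditive. If (f_n) is a sequence of real-valued functions on ℝ^d converging quasi-uniformly to f, and there exists F : ℝ^d → [0,∞] with ∫F dH < ∞ and |f_n| ≤ F on ℝ^d for every n, then ∫|f| dH < ∞ and lim_{n→∞} ∫|f_n − f| dH = 0. -/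
open MeasureTheory Filter Set Topology
open scoped ENNReal

lemma half_lintegral (φ : ℝ → ℝ≥0∞) (hφ : Measurable φ) :
    ∫⁻ t in Set.Ioi (0:ℝ), φ (t / 2) = 2 * ∫⁻ t in Set.Ioi (0:ℝ), φ t := by
  have hmeas : Measurable fun t : ℝ => (2:ℝ)⁻¹ * t := measurable_const_mul _
  have hmap : Measure.map (fun t : ℝ => (2:ℝ)⁻¹ * t) (volume.restrict (Set.Ioi (0:ℝ)))
      = ((2:ℝ≥0∞) • volume).restrict (Set.Ioi (0:ℝ)) := by
    have hpre : (fun t : ℝ => (2:ℝ)⁻¹ * t) ⁻¹' (Set.Ioi (0:ℝ)) = Set.Ioi (0:ℝ) := by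
      rw [Set.preimage_const_mul_Ioi₀ _ (by norm_num : (0:ℝ) < 2⁻¹)]
      norm_num
    rw [← hpre, ← Measure.restrict_map hmeas measurableSet_Ioi,
      Real.map_volume_mul_left (by norm_num : ((2:ℝ)⁻¹) ≠ 0)]
    norm_num
  calc ∫⁻ t in Set.Ioi (0:ℝ), φ (t / 2)
      = ∫⁻ t in Set.Ioi (0:ℝ), φ ((2:ℝ)⁻¹ * t) := by
        refine lintegral_congr fun t => by rw [div_eq_inv_mul]
    _ = ∫⁻ s, φ s ∂(Measure.map (fun t : ℝ => (2:ℝ)⁻¹ * t)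
          (volume.restrict (Set.Ioi (0:ℝ)))) := (lintegral_map hφ hmeas).symm
    _ = 2 * ∫⁻ t in Set.Ioi (0:ℝ), φ t := by
        rw [hmap, Measure.restrict_smul, lintegral_smul_measure, smul_eq_mul]


/-- Dominated convergence theorem for quasi-uniform convergence. -/
theorem choquet_dominatedConvergence_of_quasiUniform {d : ℕ}
    (H : Set (EuclideanSpace ℝ (Fin d)) → ℝ≥0∞)
    (hmono : MonotoneSF H) (hsub : FinitelySubadditive H)
    (f : ℕ → EuclideanSpace ℝ (Fin d) → ℝ) (g : EuclideanSpace ℝ (Fin d) → ℝ)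
    (hqu : QUTendsto H f g)
    (F : EuclideanSpace ℝ (Fin d) → ℝ≥0∞) (hF : choquet H F < ⊤)
    (hdom : ∀ n x, ENNReal.ofReal |f n x| ≤ F x) :
    choquet H (fun x => ENNReal.ofReal |g x|) < ⊤ ∧
      Filter.Tendsto (fun n => choquet H (fun x => ENNReal.ofReal |f n x - g x|))
        Filter.atTop (nhds 0) := by
  classical
  set φF : ℝ → ℝ≥0∞ := fun t => H {x | ENNReal.ofReal t < F x} with hφF_def
  -- Key step A : level sets of |g| are dominated by those of F
  have hA : ∀ t : ℝ, H {x | ENNReal.ofReal t < ENNReal.ofReal |g x|} ≤ φF t := by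
    intro t
    by_cases hB : φF t = ⊤
    · simp [hB]
    refine ENNReal.le_of_forall_pos_le_add fun ε hε _ => ?_
    obtain ⟨E, hE, hunif⟩ := hqu ε (by exact_mod_cast hε)
    have hsubset : {x | ENNReal.ofReal t < ENNReal.ofReal |g x|}
        ⊆ {x | ENNReal.ofReal t < F x} ∪ E := by
      intro x hx
      by_cases hxE : x ∈ E
      · exact Or.inr hxE
      · left
        have htend : Tendsto (fun n => f n x) atTop (𝓝 (g x)) :=
          hunif.tendsto_at hxE
        have h2 : Tendsto (fun n => ENNReal.ofReal |f n x|) atTop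
            (𝓝 (ENNReal.ofReal |g x|)) :=
          (ENNReal.continuous_ofReal.tendsto _).comp
            ((continuous_abs.tendsto _).comp htend)
        have hle : ENNReal.ofReal |g x| ≤ F x :=
          le_of_tendsto' h2 fun n => hdom n x
        exact lt_of_lt_of_le hx hle
    calc H {x | ENNReal.ofReal t < ENNReal.ofReal |g x|}
        ≤ H ({x | ENNReal.ofReal t < F x} ∪ E) := hmono hsubset
      _ ≤ φF t + H E := hsub _ _
      _ ≤ φF t + ε := by
          refine add_le_add le_rfl (hE.trans ?_)
          simp [ENNReal.ofReal_coe_nnreal]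
  have hφF_anti : Antitone φF := by
    intro a b hab
    exact hmono fun x hx => lt_of_le_of_lt (ENNReal.ofReal_le_ofReal hab) hx
  have hφF_meas : Measurable φF := hφF_anti.measurable
  -- Part 1
  have h1 : choquet H (fun x => ENNReal.ofReal |g x|) ≤ choquet H F :=
    lintegral_mono fun t => hA t
  refine ⟨lt_of_le_of_lt h1 hF, ?_⟩
  -- Part 2
  set Φ : ℕ → ℝ → ℝ≥0∞ :=
    fun n t => H {x | ENNReal.ofReal t < ENNReal.ofReal |f n x - g x|} with hΦ_def
  have hΦ_anti : ∀ n, Antitone (Φ n) := by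
    intro n a b hab
    exact hmono fun x hx => lt_of_le_of_lt (ENNReal.ofReal_le_ofReal hab) hx
  set ψ : ℝ → ℝ≥0∞ := fun t => φF (t / 2) + φF (t / 2) with hψ_def
  have hψ_meas : Measurable ψ :=
    ((hφF_meas.comp (measurable_id.div_const 2)).add
      (hφF_meas.comp (measurable_id.div_const 2)))
  have hψ_fin : ∫⁻ t in Set.Ioi (0:ℝ), ψ t ≠ ⊤ := by
    have : ∫⁻ t in Set.Ioi (0:ℝ), ψ t
        = (∫⁻ t in Set.Ioi (0:ℝ), φF (t / 2))
          + ∫⁻ t in Set.Ioi (0:ℝ), φF (t / 2) :=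
      lintegral_add_left (hφF_meas.comp (measurable_id.div_const 2)) _
    rw [this, half_lintegral φF hφF_meas]
    have hfin : choquet H F ≠ ⊤ := hF.ne
    have : (2 : ℝ≥0∞) * choquet H F ≠ ⊤ := ENNReal.mul_ne_top (by simp) hfin
    exact ENNReal.add_ne_top.2 ⟨this, this⟩
  have h_bound : ∀ n, Φ n ≤ᵐ[volume.restrict (Set.Ioi (0:ℝ))] ψ := by
    intro n
    filter_upwards [ae_restrict_mem measurableSet_Ioi] with t ht
    have ht0 : (0:ℝ) < t := ht
    have hsubset : {x | ENNReal.ofReal t < ENNReal.ofReal |f n x - g x|}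
        ⊆ {x | ENNReal.ofReal (t / 2) < F x}
          ∪ {x | ENNReal.ofReal (t / 2) < ENNReal.ofReal |g x|} := by
      intro x hx
      have hxr : t < |f n x - g x| := by
        by_contra hle
        exact absurd hx (not_lt.2 (ENNReal.ofReal_le_ofReal (not_lt.1 hle)))
      have htri : |f n x - g x| ≤ |f n x| + |g x| := abs_sub _ _
      have hcase : t / 2 < |f n x| ∨ t / 2 < |g x| := by
        by_contra hcon
        push_neg at hcon
        linarith [hcon.1, hcon.2]
      rcases hcase with hc | hc
      · left
        have : ENNReal.ofReal (t / 2) < ENNReal.ofReal |f n x| :=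
          (ENNReal.ofReal_lt_ofReal_iff (lt_of_le_of_lt (by positivity) hc)).2 hc
        exact lt_of_lt_of_le this (hdom n x)
      · right
        exact (ENNReal.ofReal_lt_ofReal_iff (lt_of_le_of_lt (by positivity) hc)).2 hc
    calc Φ n t ≤ H ({x | ENNReal.ofReal (t / 2) < F x}
          ∪ {x | ENNReal.ofReal (t / 2) < ENNReal.ofReal |g x|}) := hmono hsubset
      _ ≤ φF (t / 2) + H {x | ENNReal.ofReal (t / 2) < ENNReal.ofReal |g x|} := hsub _ _
      _ ≤ φF (t / 2) + φF (t / 2) := add_le_add le_rfl (hA _)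
  have h_lim : ∀ᵐ t ∂(volume.restrict (Set.Ioi (0:ℝ))),
      Tendsto (fun n => Φ n t) atTop (𝓝 0) := by
    filter_upwards [ae_restrict_mem measurableSet_Ioi] with t ht
    have ht0 : (0:ℝ) < t := ht
    rw [ENNReal.tendsto_nhds_zero]
    intro ε hε
    obtain ⟨r, hr0, hrε⟩ : ∃ r : ℝ, 0 < r ∧ ENNReal.ofReal r ≤ ε := by
      rcases eq_or_ne ε ⊤ with h | h
      · exact ⟨1, one_pos, by simp [h]⟩
      · exact ⟨ε.toReal, ENNReal.toReal_pos hε.ne' h,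
          le_of_eq (ENNReal.ofReal_toReal h)⟩
    obtain ⟨E, hE, hunif⟩ := hqu r hr0
    rw [Metric.tendstoUniformlyOn_iff] at hunif
    filter_upwards [hunif t ht0] with n hn
    have hsubset : {x | ENNReal.ofReal t < ENNReal.ofReal |f n x - g x|} ⊆ E := by
      intro x hx
      by_contra hxE
      have hd := hn x hxE
      rw [Real.dist_eq, abs_sub_comm] at hd
      exact absurd hx (not_lt.2 (ENNReal.ofReal_le_ofReal hd.le))
    exact ((hmono hsubset).trans hE).trans hrε
  have hΦ_meas : ∀ n, Measurable (Φ n) := fun n => (hΦ_anti n).measurable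
  have := tendsto_lintegral_of_dominated_convergence (μ := volume.restrict (Set.Ioi (0:ℝ)))
    (f := fun _ : ℝ => (0:ℝ≥0∞)) ψ hΦ_meas h_bound hψ_fin h_lim
  simpa [choquet, lintegral_zero] using this
end

section
/- Suppose H : 𝒫(ℝ^d) → [0,∞] is monotone and countably subadditive. Let (f_n) be a sequence of real-valued functions on ℝ^d and f : ℝ^d → ℝ with ∫|f| dH < ∞, such that ∫|f_n − f| dH ≤ 1/4^n for every n ∈ ℕ. Then f_n → f quasi-uniformly and there exists F : ℝ^d → [0,∞] with ∫F dH < ∞ and |f_n| ≤ F on ℝ^d for every n ∈ ℕ. -/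
open MeasureTheory Filter Set Topology
open scoped ENNReal

section A
variable {α : Type*} {H : Set α → ℝ≥0∞}

lemma layer_antitone (hmono : MonotoneSF H) (f : α → ℝ≥0∞) :
    Antitone (fun t : ℝ => H {x | ENNReal.ofReal t < f x}) := by
  intro s t hst
  exact hmono (fun x hx => lt_of_le_of_lt (ENNReal.ofReal_le_ofReal hst) hx)

lemma layer_measurable (hmono : MonotoneSF H) (f : α → ℝ≥0∞) :
    Measurable (fun t : ℝ => H {x | ENNReal.ofReal t < f x}) :=
  (layer_antitone hmono f).measurable

lemma choquet_chebyshev (hmono : MonotoneSF H) (h : α → ℝ) {a : ℝ} (ha : 0 < a) :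
    ENNReal.ofReal a * H {x | a < h x} ≤ choquet H (fun x => ENNReal.ofReal (h x)) := by
  have hsub : ∀ t ∈ Set.Ioo (0:ℝ) a,
      H {x | a < h x} ≤ H {x | ENNReal.ofReal t < ENNReal.ofReal (h x)} := by
    intro t ht
    apply hmono
    intro x hx
    have hx' : a < h x := hx
    exact (ENNReal.ofReal_lt_ofReal_iff (lt_trans ha hx')).mpr (lt_trans ht.2 hx')
  calc ENNReal.ofReal a * H {x | a < h x}
      = ∫⁻ _ in Set.Ioo (0:ℝ) a, H {x | a < h x} := by
        rw [setLIntegral_const, Real.volume_Ioo, sub_zero, mul_comm]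
    _ ≤ ∫⁻ t in Set.Ioo (0:ℝ) a, H {x | ENNReal.ofReal t < ENNReal.ofReal (h x)} := by
        apply setLIntegral_mono (layer_measurable hmono _) hsub
    _ ≤ choquet H (fun x => ENNReal.ofReal (h x)) := by
        apply lintegral_mono_set Set.Ioo_subset_Ioi_self

lemma empty_eq_zero (hmono : MonotoneSF H) {f : α → ℝ≥0∞}
    (hf : choquet H f < ⊤) : H ∅ = 0 := by
  by_contra h0
  have hle : ∀ t : ℝ, H ∅ ≤ H {x | ENNReal.ofReal t < f x} :=
    fun t => hmono (Set.empty_subset _)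
  have : (⊤ : ℝ≥0∞) ≤ choquet H f := by
    calc (⊤ : ℝ≥0∞) = H ∅ * volume (Set.Ioi (0:ℝ)) := by
          rw [Real.volume_Ioi, ENNReal.mul_top h0]
      _ = ∫⁻ _ in Set.Ioi (0:ℝ), H ∅ := (setLIntegral_const _ _).symm
      _ ≤ choquet H f := lintegral_mono fun t => hle t
  exact absurd (lt_of_le_of_lt this hf) (lt_irrefl _)

lemma finsub (hcount : CountablySubadditive H) (h0 : H ∅ = 0) (hmono : MonotoneSF H)
    (A B : Set α) : H (A ∪ B) ≤ H A + H B := by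
  set G : ℕ → Set α := fun n => if n = 0 then A else if n = 1 then B else ∅ with hG
  have hsub : A ∪ B ⊆ ⋃ n, G n := by
    apply Set.union_subset
    · exact Set.subset_iUnion_of_subset 0 (by simp [hG])
    · exact Set.subset_iUnion_of_subset 1 (by simp [hG])
  have htsum : ∑' n, H (G n) = H A + H B := by
    have hz : ∀ b ∉ ({0, 1} : Finset ℕ), H (G b) = 0 := by
      intro b hb
      simp only [Finset.mem_insert, Finset.mem_singleton, not_or] at hb
      simp [hG, hb.1, hb.2, h0]
    rw [tsum_eq_sum hz]
    simp [hG]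
  calc H (A ∪ B) ≤ H (⋃ n, G n) := hmono hsub
    _ ≤ ∑' n, H (G n) := hcount G
    _ = H A + H B := htsum

lemma lintegral_Ioi_half (φ : ℝ → ℝ≥0∞) :
    ∫⁻ t in Set.Ioi (0:ℝ), φ (t / 2) = 2 * ∫⁻ t in Set.Ioi (0:ℝ), φ t := by
  have heq : (fun t : ℝ => t / 2) = fun t : ℝ => (2:ℝ)⁻¹ * t := by ext t; ring
  have hemb : MeasurableEmbedding (fun t : ℝ => t / 2) := by
    rw [heq]
    exact (Homeomorph.mulLeft₀ (2:ℝ)⁻¹ (by norm_num)).measurableEmbedding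
  have hpre : (fun t : ℝ => t / 2) ⁻¹' (Set.Ioi 0) = Set.Ioi 0 := by
    ext t; simp only [Set.mem_preimage, Set.mem_Ioi]; constructor <;> intro h <;> linarith
  have hmap : Measure.map (fun t : ℝ => t / 2) (volume.restrict (Set.Ioi 0)) =
      (2 : ℝ≥0∞) • volume.restrict (Set.Ioi 0) := by
    conv_lhs => rw [← hpre]
    rw [← Measure.restrict_map hemb.measurable measurableSet_Ioi, heq,
      Real.map_volume_mul_left (by norm_num : ((2:ℝ)⁻¹) ≠ 0)]
    norm_num
  calc ∫⁻ t in Set.Ioi (0:ℝ), φ (t / 2)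
      = ∫⁻ t, φ t ∂(Measure.map (fun t : ℝ => t / 2) (volume.restrict (Set.Ioi 0))) :=
        (hemb.lintegral_map φ).symm
    _ = 2 * ∫⁻ t in Set.Ioi (0:ℝ), φ t := by rw [hmap, lintegral_smul_measure, smul_eq_mul]

end A

section B
variable {α : Type*} {H : Set α → ℝ≥0∞}

lemma choquet_two_mul (m : α → ℝ≥0∞) :
    choquet H (fun x => 2 * m x) = 2 * choquet H m := by
  have hptwise : ∀ t ∈ Set.Ioi (0:ℝ),
      H {x | ENNReal.ofReal t < 2 * m x} = H {x | ENNReal.ofReal (t/2) < m x} := by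
    intro t _
    congr 1
    ext x
    simp only [Set.mem_setOf_eq]
    rw [ENNReal.ofReal_div_of_pos (by norm_num : (0:ℝ) < 2)]
    have h2 : (ENNReal.ofReal 2) = 2 := by norm_num
    rw [h2, ENNReal.div_lt_iff (by norm_num) (by norm_num), mul_comm]
  calc choquet H (fun x => 2 * m x)
      = ∫⁻ t in Set.Ioi (0:ℝ), H {x | ENNReal.ofReal (t/2) < m x} :=
        setLIntegral_congr_fun measurableSet_Ioi hptwise
    _ = 2 * choquet H m := lintegral_Ioi_half (fun s => H {x | ENNReal.ofReal s < m x})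

lemma choquet_sup_le (hmono : MonotoneSF H) (hcount : CountablySubadditive H)
    (h0 : H ∅ = 0) (a b : α → ℝ≥0∞) :
    choquet H (fun x => a x ⊔ b x) ≤ choquet H a + choquet H b := by
  calc choquet H (fun x => a x ⊔ b x)
      ≤ ∫⁻ t in Set.Ioi (0:ℝ),
          (H {x | ENNReal.ofReal t < a x} + H {x | ENNReal.ofReal t < b x}) := by
        apply lintegral_mono
        intro t
        have : {x | ENNReal.ofReal t < a x ⊔ b x} =
            {x | ENNReal.ofReal t < a x} ∪ {x | ENNReal.ofReal t < b x} := by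
          ext x; simp [lt_sup_iff]
        show H {x | ENNReal.ofReal t < a x ⊔ b x} ≤ _
        rw [this]
        exact finsub hcount h0 hmono _ _
    _ = choquet H a + choquet H b :=
        lintegral_add_left (layer_measurable hmono a) _

lemma choquet_iSup_le (hmono : MonotoneSF H) (hcount : CountablySubadditive H)
    (u : ℕ → α → ℝ≥0∞) :
    choquet H (fun x => ⨆ n, u n x) ≤ ∑' n, choquet H (u n) := by
  calc choquet H (fun x => ⨆ n, u n x)
      ≤ ∫⁻ t in Set.Ioi (0:ℝ), ∑' n, H {x | ENNReal.ofReal t < u n x} := by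
        apply lintegral_mono
        intro t
        have : {x | ENNReal.ofReal t < ⨆ n, u n x} =
            ⋃ n, {x | ENNReal.ofReal t < u n x} := by
          ext x; simp [lt_iSup_iff]
        show H {x | ENNReal.ofReal t < ⨆ n, u n x} ≤ _
        rw [this]
        exact hcount _
    _ = ∑' n, choquet H (u n) :=
        lintegral_tsum fun n => (layer_measurable hmono (u n)).aemeasurable

lemma choquet_mono' (hmono : MonotoneSF H) {a b : α → ℝ≥0∞} (hab : ∀ x, a x ≤ b x) :
    choquet H a ≤ choquet H b :=
  lintegral_mono fun t => hmono fun x hx => lt_of_lt_of_le hx (hab x)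

end B

/-- Partial converse of the dominated convergence theorem. -/
theorem choquet_quasiUniform_of_rapidConvergence {d : ℕ}
    (H : Set (EuclideanSpace ℝ (Fin d)) → ℝ≥0∞)
    (hmono : MonotoneSF H) (hcount : CountablySubadditive H)
    (f : ℕ → EuclideanSpace ℝ (Fin d) → ℝ) (g : EuclideanSpace ℝ (Fin d) → ℝ)
    (hg : choquet H (fun x => ENNReal.ofReal |g x|) < ⊤)
    (hrate : ∀ n : ℕ,
      choquet H (fun x => ENNReal.ofReal |f n x - g x|) ≤ (1 / 4 : ℝ≥0∞) ^ n) :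
    QUTendsto H f g ∧
      ∃ F : EuclideanSpace ℝ (Fin d) → ℝ≥0∞, choquet H F < ⊤ ∧
        ∀ n x, ENNReal.ofReal |f n x| ≤ F x := by
  have h0 : H ∅ = 0 := empty_eq_zero hmono hg
  have hhalf : ENNReal.ofReal ((1/2 : ℝ)) = (1/2 : ℝ≥0∞) := by
    rw [ENNReal.ofReal_div_of_pos (by norm_num)]; norm_num
  have hquarter : ENNReal.ofReal ((1/4 : ℝ)) = (1/4 : ℝ≥0∞) := by
    rw [ENNReal.ofReal_div_of_pos (by norm_num)]; norm_num
  have hhalf_ne0 : (1/2 : ℝ≥0∞) ≠ 0 := by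
    rw [one_div]; exact ENNReal.inv_ne_zero.mpr ENNReal.ofNat_ne_top
  have hhalf_netop : (1/2 : ℝ≥0∞) ≠ ⊤ := by
    rw [one_div]; exact ENNReal.inv_ne_top.mpr two_ne_zero
  have hhalfpow : ∀ n : ℕ, ENNReal.ofReal ((1/2 : ℝ)^n) = (1/2 : ℝ≥0∞)^n := by
    intro n; rw [ENNReal.ofReal_pow (by norm_num), hhalf]
  set E : ℕ → Set (EuclideanSpace ℝ (Fin d)) :=
    fun n => {x | (1/2 : ℝ)^n < |f n x - g x|} with hEdef
  have hE : ∀ n, H (E n) ≤ (1/2 : ℝ≥0∞)^n := by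
    intro n
    have hcheb := choquet_chebyshev hmono (fun x => |f n x - g x|)
      (pow_pos (by norm_num : (0:ℝ) < 1/2) n)
    have h1 : (1/2 : ℝ≥0∞)^n * H (E n) ≤ (1/4 : ℝ≥0∞)^n := by
      rw [← hhalfpow n]
      exact le_trans hcheb (hrate n)
    have h4 : (1/4 : ℝ≥0∞)^n = (1/2 : ℝ≥0∞)^n * (1/2 : ℝ≥0∞)^n := by
      rw [← mul_pow, ← hhalf, ← ENNReal.ofReal_mul (by norm_num), ← hquarter]
      norm_num
    rw [h4] at h1
    exact (ENNReal.mul_le_mul_iff_right (pow_ne_zero n hhalf_ne0)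
      (ENNReal.pow_ne_top hhalf_netop)).mp h1
  constructor
  · -- QUTendsto
    intro ε hε
    obtain ⟨N, hN⟩ := exists_pow_lt_of_lt_one (half_pos hε) (by norm_num : (1/2:ℝ) < 1)
    refine ⟨⋃ k, E (N + k), ?_, ?_⟩
    · calc H (⋃ k, E (N + k)) ≤ ∑' k, H (E (N + k)) := hcount _
        _ ≤ ∑' k : ℕ, (1/2 : ℝ≥0∞)^(N + k) := ENNReal.tsum_le_tsum (fun k => hE (N + k))
        _ = (1/2 : ℝ≥0∞)^N * ∑' k : ℕ, (1/2 : ℝ≥0∞)^k := by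
            simp_rw [pow_add]; rw [ENNReal.tsum_mul_left]
        _ = (1/2 : ℝ≥0∞)^N * 2 := by
            rw [ENNReal.tsum_geometric]
            norm_num
        _ ≤ ENNReal.ofReal ε := by
            rw [← hhalfpow N, ← ENNReal.ofReal_ofNat 2,
              ← ENNReal.ofReal_mul (by positivity)]
            exact ENNReal.ofReal_le_ofReal (by nlinarith)
    · rw [Metric.tendstoUniformlyOn_iff]
      intro δ hδ
      obtain ⟨M, hM⟩ := exists_pow_lt_of_lt_one hδ (by norm_num : (1/2:ℝ) < 1)
      filter_upwards [eventually_ge_atTop (max N M)] with n hn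
      intro x hx
      have hxn : x ∉ E n := by
        intro hmem
        apply hx
        refine Set.mem_iUnion.mpr ⟨n - N, ?_⟩
        rwa [Nat.add_sub_cancel' (le_trans (le_max_left N M) hn)]
      have hle : |f n x - g x| ≤ (1/2 : ℝ)^n := not_lt.mp hxn
      have : (1/2 : ℝ)^n ≤ (1/2 : ℝ)^M :=
        pow_le_pow_of_le_one (by norm_num) (by norm_num) (le_trans (le_max_right N M) hn)
      rw [Real.dist_eq, abs_sub_comm]
      linarith
  · -- dominating function
    refine ⟨fun x => 2 * (ENNReal.ofReal |g x| ⊔ ⨆ n, ENNReal.ofReal |f n x - g x|), ?_, ?_⟩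
    · rw [choquet_two_mul]
      have hb : choquet H (fun x => ⨆ n, ENNReal.ofReal |f n x - g x|) ≤
          ∑' n : ℕ, (1/4 : ℝ≥0∞)^n := by
        refine le_trans (choquet_iSup_le hmono hcount _) (ENNReal.tsum_le_tsum hrate)
      have hsum : (∑' n : ℕ, (1/4 : ℝ≥0∞)^n) < ⊤ := by
        rw [ENNReal.tsum_geometric]
        refine ENNReal.inv_lt_top.mpr ?_
        rw [tsub_pos_iff_lt]
        norm_num
      have hmax := choquet_sup_le hmono hcount h0
        (fun x => ENNReal.ofReal |g x|) (fun x => ⨆ n, ENNReal.ofReal |f n x - g x|)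
      refine ENNReal.mul_lt_top (by norm_num) ?_
      exact lt_of_le_of_lt hmax (ENNReal.add_lt_top.mpr ⟨hg, lt_of_le_of_lt hb hsum⟩)
    · intro n x
      have habs : |f n x| ≤ |g x| + |f n x - g x| := by
        have := abs_add_le (g x) (f n x - g x)
        simpa using this
      calc ENNReal.ofReal |f n x|
          ≤ ENNReal.ofReal (|g x| + |f n x - g x|) := ENNReal.ofReal_le_ofReal habs
        _ = ENNReal.ofReal |g x| + ENNReal.ofReal |f n x - g x| :=
            ENNReal.ofReal_add (abs_nonneg _) (abs_nonneg _)
        _ ≤ (ENNReal.ofReal |g x| ⊔ ⨆ m, ENNReal.ofReal |f m x - g x|) +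
            (ENNReal.ofReal |g x| ⊔ ⨆ m, ENNReal.ofReal |f m x - g x|) :=
            add_le_add (le_sup_left)
              (le_trans (le_iSup (fun m => ENNReal.ofReal |f m x - g x|) n) le_sup_right)
        _ = 2 * (ENNReal.ofReal |g x| ⊔ ⨆ m, ENNReal.ofReal |f m x - g x|) :=
            (two_mul _).symm
end

section
/- Suppose H : 𝒫(ℝ^d) → [0,∞] is monotone and finitely subadditive. If f : ℝ^d → [-∞,∞] is quasicontinuous and ∫|f| dH < ∞, then there exists a sequence (f_n) of bounded continuous real-valued functions on ℝ^d such that lim_{n→∞} ∫|f_n − f| dH = 0. -/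
open MeasureTheory Filter Set Topology
open scoped ENNReal

/-! ### Auxiliary lemmas for the proof -/

/-- Clamp a real number to `[-c, c]`. -/
noncomputable def clampR (c r : ℝ) : ℝ := max (-c) (min c r)

lemma clampR_abs_le {c : ℝ} (hc : 0 ≤ c) (r : ℝ) : |clampR c r| ≤ c := by
  unfold clampR
  rw [abs_le]
  exact ⟨le_max_left _ _, max_le (by linarith) (min_le_left _ _)⟩

lemma clampR_eq_of_abs_le {c r : ℝ} (h : |r| ≤ c) : clampR c r = r := by
  rw [abs_le] at h
  unfold clampR
  rw [min_eq_right h.2, max_eq_right h.1]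

lemma clampR_continuous (c : ℝ) : Continuous (clampR c) :=
  continuous_const.max (continuous_const.min continuous_id)

lemma clampR_sub_gt {c r t : ℝ} (hc : 0 ≤ c) (ht : 0 < t)
    (h : t < |clampR c r - r|) : c + t < |r| := by
  rcases le_total r c with h1 | h1
  · rcases le_total (-c) r with h2 | h2
    · rw [clampR_eq_of_abs_le (abs_le.2 ⟨h2, h1⟩)] at h
      simp only [sub_self, abs_zero] at h
      linarith
    · have : clampR c r = -c := by
        unfold clampR
        rw [min_eq_right (by linarith : r ≤ c), max_eq_left h2]
      rw [this] at h
      rw [abs_of_nonneg (by linarith)] at h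
      rw [abs_of_nonpos (by linarith)]
      linarith
  · have : clampR c r = c := by
      unfold clampR
      rw [min_eq_left h1, max_eq_right (by linarith)]
    rw [this] at h
    rw [abs_of_nonpos (by linarith)] at h
    rw [abs_of_nonneg (by linarith)]
    linarith

lemma ereal_abs_coe_sub_le (a : ℝ) (y : EReal) :
    ((a : EReal) - y).abs ≤ ENNReal.ofReal |a| + y.abs := by
  induction y using EReal.rec with
  | bot => simp [EReal.coe_sub_bot]
  | coe b =>
      rw [← EReal.coe_sub, EReal.abs_def, EReal.abs_def,
        ← ENNReal.ofReal_add (abs_nonneg _) (abs_nonneg _)]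
      exact ENNReal.ofReal_le_ofReal (abs_sub a b)
  | top => simp [EReal.sub_top]

/-- Approximation of quasicontinuous functions with finite Choquet integral
by bounded continuous functions. -/
theorem quasicontinuous_approx_boundedContinuous {d : ℕ}
    (H : Set (EuclideanSpace ℝ (Fin d)) → ℝ≥0∞)
    (hmono : MonotoneSF H) (hsub : FinitelySubadditive H)
    (f : EuclideanSpace ℝ (Fin d) → EReal) (hf : QuasicontinuousE H f)
    (hint : choquet H (fun x => (f x).abs) < ⊤) :
    ∃ g : ℕ → EuclideanSpace ℝ (Fin d) → ℝ,
      (∀ n, Continuous (g n) ∧ ∃ M : ℝ, ∀ x, |g n x| ≤ M) ∧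
      Filter.Tendsto (fun n => choquet H (fun x => ((g n x : EReal) - f x).abs))
        Filter.atTop (nhds 0) := by
  classical
  have hpos : ∀ n : ℕ, (0:ℝ) < 1 / ((n:ℝ) + 1)^2 := fun n => by positivity
  choose ω hωopen hωle hωfin hωcont using fun n : ℕ => hf (1 / ((n:ℝ) + 1)^2) (hpos n)
  have hNpos : ∀ n : ℕ, (0:ℝ) ≤ (n:ℝ) + 1 := fun n => by positivity
  have hmaps : ∀ n : ℕ, Set.MapsTo f (ω n)ᶜ ({⊥, ⊤}ᶜ : Set EReal) := by
    intro n x hx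
    simp only [Set.mem_compl_iff, Set.mem_insert_iff, Set.mem_singleton_iff, not_or]
    exact ⟨(hωfin n x hx).2, (hωfin n x hx).1⟩
  have hcont' : ∀ n : ℕ, ContinuousOn (fun x => clampR ((n:ℝ)+1) (f x).toReal) (ω n)ᶜ :=
    fun n => (clampR_continuous _).comp_continuousOn
      (EReal.continuousOn_toReal.comp (hωcont n) (hmaps n))
  have hclosed : ∀ n : ℕ, IsClosed ((ω n)ᶜ) := fun n => (hωopen n).isClosed_compl
  have hGex : ∀ n : ℕ, ∃ G : C(EuclideanSpace ℝ (Fin d), ℝ),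
      G.restrict ((ω n)ᶜ) =
        ContinuousMap.mk _ (continuousOn_iff_continuous_restrict.1 (hcont' n)) :=
    fun n => ContinuousMap.exists_restrict_eq (hclosed n) _
  choose G hG using hGex
  refine ⟨fun n x => clampR ((n:ℝ)+1) (G n x), ?_, ?_⟩
  · exact fun n => ⟨(clampR_continuous _).comp (G n).continuous,
      (n:ℝ)+1, fun x => clampR_abs_le (hNpos n) _⟩
  have hGeq : ∀ n : ℕ, ∀ x ∉ ω n, G n x = clampR ((n:ℝ)+1) (f x).toReal := by
    intro n x hx
    have h0 := DFunLike.congr_fun (hG n) ⟨x, hx⟩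
    simpa using h0
  set h : ℝ → ℝ≥0∞ := fun t => H {x | ENNReal.ofReal t < (f x).abs} with hh
  have h_anti : Antitone h := fun s t hst =>
    hmono (fun x hx => lt_of_le_of_lt (ENNReal.ofReal_le_ofReal hst) hx)
  have h_meas : Measurable h := h_anti.measurable
  set μ' := volume.withDensity h with hμ'
  have hT : ∀ a : ℝ, μ' (Set.Ioi a) = ∫⁻ t in Set.Ioi a, h t :=
    fun a => withDensity_apply h measurableSet_Ioi
  have hμ'fin : μ' (Set.Ioi (0:ℝ)) < ⊤ := by
    rw [hT]; exact hint
  have htrans : ∀ c a : ℝ, ∫⁻ t in Set.Ioi a, h (t + c) = ∫⁻ s in Set.Ioi (a + c), h s := by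
    intro c a
    have hmp : MeasurePreserving (fun t : ℝ => t + c) volume volume :=
      measurePreserving_add_right volume c
    have hemb : MeasurableEmbedding (fun t : ℝ => t + c) :=
      (MeasurableEquiv.addRight c).measurableEmbedding
    have hpre : (fun t : ℝ => t + c) ⁻¹' Set.Ioi (a + c) = Set.Ioi a := by
      ext t; simp
    rw [← hpre]
    exact hmp.setLIntegral_comp_preimage_emb hemb h (Set.Ioi (a + c))
  have key : ∀ n : ℕ, choquet H (fun x => ((clampR ((n:ℝ)+1) (G n x) : EReal) - f x).abs)
      ≤ H (ω n) * ENNReal.ofReal (2*((n:ℝ)+1))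
        + (μ' (Set.Ioi ((n:ℝ)+1)) + μ' (Set.Ioi ((n:ℝ)+1))) := by
    intro n
    set N := (n:ℝ) + 1 with hNdef
    have hN0 : (0:ℝ) ≤ N := hNpos n
    set D : EuclideanSpace ℝ (Fin d) → ℝ≥0∞ :=
      fun x => ((clampR N (G n x) : EReal) - f x).abs with hD
    have hggeq : ∀ x ∉ ω n, clampR N (G n x) = clampR N (f x).toReal := by
      intro x hx
      rw [hGeq n x hx, clampR_eq_of_abs_le (clampR_abs_le hN0 _)]
    set ind1 : ℝ → ℝ≥0∞ := (Set.Ioc (0:ℝ) (2*N)).indicator (fun _ => H (ω n)) with hind1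
    set ind2 : ℝ → ℝ≥0∞ := (Set.Ioi (2*N)).indicator (fun t => h (t - N)) with hind2
    have hpt : ∀ t ∈ Set.Ioi (0:ℝ), H {x | ENNReal.ofReal t < D x}
        ≤ ind1 t + (ind2 t + h (N + t)) := by
      intro t ht
      have ht0 : (0:ℝ) < t := ht
      have hsub1 : {x | ENNReal.ofReal t < D x} ⊆
          (ω n ∩ {x | ENNReal.ofReal t < D x}) ∪ {x | ENNReal.ofReal (N + t) < (f x).abs} := by
        intro x hx
        by_cases hxω : x ∈ ω n
        · exact Or.inl ⟨hxω, hx⟩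
        · right
          have hfx := hωfin n x hxω
          set r := (f x).toReal with hr
          have hfxr : f x = (r : EReal) := (EReal.coe_toReal hfx.1 hfx.2).symm
          have hDx : D x = ENNReal.ofReal |clampR N r - r| := by
            rw [hD]
            simp only
            rw [hggeq x hxω, hfxr, EReal.toReal_coe, ← EReal.coe_sub, EReal.abs_def]
          rw [Set.mem_setOf_eq, hDx] at hx
          have h1 : t < |clampR N r - r| := by
            by_contra hcon
            push_neg at hcon
            exact absurd (ENNReal.ofReal_le_ofReal hcon) (not_le.2 hx)
          have h2 : N + t < |r| := clampR_sub_gt hN0 ht0 h1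
          rw [Set.mem_setOf_eq, hfxr, EReal.abs_def]
          exact (ENNReal.ofReal_lt_ofReal_iff_of_nonneg (by linarith)).2 h2
      have hS1 : H (ω n ∩ {x | ENNReal.ofReal t < D x}) ≤ ind1 t + ind2 t := by
        by_cases h2N : t ≤ 2*N
        · have he1 : ind1 t = H (ω n) := Set.indicator_of_mem (Set.mem_Ioc.mpr ⟨ht0, h2N⟩) _
          rw [he1]
          exact le_add_right (hmono Set.inter_subset_left)
        · push_neg at h2N
          have he1 : ind1 t = 0 :=
            Set.indicator_of_notMem (fun hmem => absurd hmem.2 (not_le.2 h2N)) _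
          have he2 : ind2 t = h (t - N) := Set.indicator_of_mem (Set.mem_Ioi.mpr h2N) _
          rw [he1, he2, zero_add]
          refine hmono ?_
          rintro x ⟨hxω, hx⟩
          have hb : D x ≤ ENNReal.ofReal N + (f x).abs := by
            rw [hD]
            simp only
            refine le_trans (ereal_abs_coe_sub_le (clampR N (G n x)) (f x)) ?_
            gcongr
            exact clampR_abs_le hN0 _
          have hlt : ENNReal.ofReal t < ENNReal.ofReal N + (f x).abs :=
            lt_of_lt_of_le hx hb
          rw [Set.mem_setOf_eq]
          by_contra hcon
          push_neg at hcon
          have hle2 : ENNReal.ofReal N + (f x).abs ≤ ENNReal.ofReal t := by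
            calc ENNReal.ofReal N + (f x).abs
                ≤ ENNReal.ofReal N + ENNReal.ofReal (t - N) := by gcongr
              _ = ENNReal.ofReal (N + (t - N)) :=
                  (ENNReal.ofReal_add hN0 (by linarith)).symm
              _ = ENNReal.ofReal t := by ring_nf
          exact absurd hlt (not_lt.2 hle2)
      calc H {x | ENNReal.ofReal t < D x}
          ≤ H ((ω n ∩ {x | ENNReal.ofReal t < D x}) ∪
              {x | ENNReal.ofReal (N + t) < (f x).abs}) := hmono hsub1
        _ ≤ H (ω n ∩ {x | ENNReal.ofReal t < D x})
            + H {x | ENNReal.ofReal (N + t) < (f x).abs} := hsub _ _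
        _ ≤ (ind1 t + ind2 t) + h (N + t) := add_le_add hS1 le_rfl
        _ = ind1 t + (ind2 t + h (N + t)) := add_assoc _ _ _
    have hind1m : Measurable ind1 := measurable_const.indicator measurableSet_Ioc
    have hind2m : Measurable ind2 :=
      ((h_anti.comp_monotone (fun a b hab => sub_le_sub_right hab N)).measurable).indicator measurableSet_Ioi
    calc choquet H D = ∫⁻ t in Set.Ioi (0:ℝ), H {x | ENNReal.ofReal t < D x} := rfl
      _ ≤ ∫⁻ t in Set.Ioi (0:ℝ), (ind1 t + (ind2 t + h (N + t))) :=
          setLIntegral_mono' measurableSet_Ioi hpt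
      _ = (∫⁻ t in Set.Ioi (0:ℝ), ind1 t)
          + ((∫⁻ t in Set.Ioi (0:ℝ), ind2 t) + ∫⁻ t in Set.Ioi (0:ℝ), h (N + t)) := by
          rw [lintegral_add_left hind1m, lintegral_add_left hind2m]
      _ = H (ω n) * ENNReal.ofReal (2*N) + (μ' (Set.Ioi N) + μ' (Set.Ioi N)) := by
          congr 1
          · rw [hind1, lintegral_indicator measurableSet_Ioc, setLIntegral_const,
              Measure.restrict_apply measurableSet_Ioc,
              Set.inter_eq_left.2 Set.Ioc_subset_Ioi_self, Real.volume_Ioc, sub_zero]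
          · congr 1
            · rw [hind2, lintegral_indicator measurableSet_Ioi,
                Measure.restrict_restrict measurableSet_Ioi]
              have hIoi : Set.Ioi (2*N) ∩ Set.Ioi (0:ℝ) = Set.Ioi (2*N) :=
                Set.inter_eq_left.2 (Set.Ioi_subset_Ioi (by linarith))
              rw [hIoi]
              simp only [sub_eq_add_neg]
              rw [htrans (-N) (2*N)]
              have h2 : (2*N + -N) = N := by ring
              rw [h2, hT]
            · have h1 : (fun t : ℝ => h (N + t)) = fun t : ℝ => h (t + N) := by
                funext t; rw [add_comm]
              rw [h1, htrans N 0, zero_add, hT]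
  have hB : Filter.Tendsto (fun n : ℕ => μ' (Set.Ioi ((n:ℝ)+1))) Filter.atTop (nhds 0) := by
    have hs : ∀ n : ℕ, MeasureTheory.NullMeasurableSet (Set.Ioi ((n:ℝ)+1)) μ' :=
      fun n => measurableSet_Ioi.nullMeasurableSet
    have hanti : Antitone (fun n : ℕ => Set.Ioi ((n:ℝ)+1)) := by
      intro i j hij
      exact Set.Ioi_subset_Ioi (by linarith [(Nat.cast_le (α := ℝ)).2 hij])
    have hfin : ∃ i : ℕ, μ' (Set.Ioi ((i:ℝ)+1)) ≠ ⊤ :=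
      ⟨0, (lt_of_le_of_lt (measure_mono (Set.Ioi_subset_Ioi (by norm_num))) hμ'fin).ne⟩
    have hlim := MeasureTheory.tendsto_measure_iInter_atTop hs hanti hfin
    have hempty : ⋂ n : ℕ, Set.Ioi ((n:ℝ)+1) = ∅ := by
      ext x
      simp only [Set.mem_iInter, Set.mem_Ioi, Set.mem_empty_iff_false, iff_false, not_forall,
        not_lt]
      obtain ⟨k, hk⟩ := exists_nat_gt x
      exact ⟨k, by linarith⟩
    rw [hempty, measure_empty] at hlim
    exact hlim
  have hA : Filter.Tendsto (fun n : ℕ => H (ω n) * ENNReal.ofReal (2*((n:ℝ)+1)))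
      Filter.atTop (nhds 0) := by
    have hb : ∀ n : ℕ, H (ω n) * ENNReal.ofReal (2*((n:ℝ)+1))
        ≤ ENNReal.ofReal (2 / ((n:ℝ)+1)) := by
      intro n
      calc H (ω n) * ENNReal.ofReal (2*((n:ℝ)+1))
          ≤ ENNReal.ofReal (1/((n:ℝ)+1)^2) * ENNReal.ofReal (2*((n:ℝ)+1)) := by
            gcongr
            exact hωle n
        _ = ENNReal.ofReal (1/((n:ℝ)+1)^2 * (2*((n:ℝ)+1))) :=
            (ENNReal.ofReal_mul (by positivity)).symm
        _ = ENNReal.ofReal (2/((n:ℝ)+1)) := by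
            congr 1
            have hne : ((n:ℝ)+1) ≠ 0 := by positivity
            field_simp
    have hlim : Filter.Tendsto (fun n : ℕ => ENNReal.ofReal (2/((n:ℝ)+1)))
        Filter.atTop (nhds 0) := by
      rw [← ENNReal.ofReal_zero]
      apply ENNReal.tendsto_ofReal
      have h2 := tendsto_one_div_add_atTop_nhds_zero_nat.const_mul (2:ℝ)
      simpa [div_eq_mul_inv, mul_comm, mul_assoc] using h2
    exact tendsto_of_tendsto_of_tendsto_of_le_of_le tendsto_const_nhds hlim
      (fun n => zero_le) hb
  have htot : Filter.Tendsto (fun n : ℕ => H (ω n) * ENNReal.ofReal (2*((n:ℝ)+1))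
      + (μ' (Set.Ioi ((n:ℝ)+1)) + μ' (Set.Ioi ((n:ℝ)+1)))) Filter.atTop (nhds 0) := by
    have h3 := hA.add (hB.add hB)
    simpa using h3
  exact tendsto_of_tendsto_of_tendsto_of_le_of_le tendsto_const_nhds htot
    (fun n => zero_le) key
end

section
/- Suppose H : 𝒫(ℝ^d) → [0,∞] is monotone, finitely subadditive, and evanescent. If f : ℝ^d → [-∞,∞] is quasicontinuous and ∫|f| dH < ∞, then there exists a sequence (φ_n) of continuous compactly supported functions on ℝ^d such that lim_{n→∞} ∫|φ_n − f| dH = 0. -/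
open MeasureTheory Filter Set Topology
open scoped ENNReal

namespace ChoquetAux7


lemma lintegral_Ioi_shift {A : ℝ → ℝ≥0∞} (hA : Measurable A) (b c : ℝ) :
    ∫⁻ t in Ioi c, A (t + b) = ∫⁻ s in Ioi (c + b), A s := by
  have h1 : ∀ t : ℝ, (Ioi c).indicator (fun t => A (t + b)) t
      = (Ioi (c + b)).indicator A (t + b) := by
    intro t
    by_cases ht : t ∈ Ioi c
    · rw [indicator_of_mem ht, indicator_of_mem]
      simp only [mem_Ioi] at ht ⊢; linarith
    · rw [indicator_of_notMem ht, indicator_of_notMem]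
      simp only [mem_Ioi, not_lt] at ht ⊢; linarith
  calc ∫⁻ t in Ioi c, A (t + b)
      = ∫⁻ t, (Ioi c).indicator (fun t => A (t + b)) t :=
        (lintegral_indicator measurableSet_Ioi _).symm
    _ = ∫⁻ t, (Ioi (c + b)).indicator A (t + b) := by simp_rw [h1]
    _ = ∫⁻ s, (Ioi (c + b)).indicator A s := lintegral_add_right_eq_self _ b
    _ = ∫⁻ s in Ioi (c + b), A s := lintegral_indicator measurableSet_Ioi _

lemma lintegral_Ioc_half {A : ℝ → ℝ≥0∞} (hA : Measurable A) {δ : ℝ} (hδ : 0 < δ) :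
    ∫⁻ t in Ioc 0 (2*δ), A (t/2) = 2 * ∫⁻ s in Ioc 0 δ, A s := by
  set g : ℝ → ℝ≥0∞ := (Ioc (0:ℝ) δ).indicator A with hg
  have hgm : Measurable g := hA.indicator measurableSet_Ioc
  have h1 : ∀ t : ℝ, (Ioc (0:ℝ) (2*δ)).indicator (fun t => A (t/2)) t = g (2⁻¹ * t) := by
    intro t
    by_cases ht : t ∈ Ioc (0:ℝ) (2*δ)
    · rw [indicator_of_mem ht, hg, indicator_of_mem]
      · norm_num [div_eq_inv_mul]
      · obtain ⟨h1, h2⟩ := ht; constructor <;> [positivity; linarith]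
    · rw [indicator_of_notMem ht, hg, indicator_of_notMem]
      simp only [mem_Ioc, not_and_or, not_lt, not_le] at ht ⊢
      rcases ht with h | h
      · left; linarith
      · right; linarith
  calc ∫⁻ t in Ioc 0 (2*δ), A (t/2)
      = ∫⁻ t, (Ioc (0:ℝ) (2*δ)).indicator (fun t => A (t/2)) t :=
        (lintegral_indicator measurableSet_Ioc _).symm
    _ = ∫⁻ t, g (2⁻¹ * t) := by simp_rw [h1]
    _ = ∫⁻ s, g s ∂(Measure.map (2⁻¹ * ·) volume) :=
        (lintegral_map hgm (measurable_const_mul _)).symm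
    _ = ∫⁻ s, g s ∂(ENNReal.ofReal |((2:ℝ)⁻¹)⁻¹| • volume) := by
        rw [Real.map_volume_mul_left (by norm_num : ((2:ℝ)⁻¹) ≠ 0)]
    _ = 2 * ∫⁻ s, g s := by
        rw [lintegral_smul_measure]; norm_num
    _ = 2 * ∫⁻ s in Ioc 0 δ, A s := by rw [hg, lintegral_indicator measurableSet_Ioc]

lemma tendsto_tail {A : ℝ → ℝ≥0∞} (hA : Measurable A)
    (hfin : ∫⁻ t in Ioi (0:ℝ), A t ≠ ⊤) :
    Tendsto (fun n : ℕ => ∫⁻ t in Ioi ((n:ℝ)), A t) atTop (𝓝 0) := by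
  set ν := volume.withDensity A with hν
  have happ : ∀ n : ℕ, ∫⁻ t in Ioi ((n:ℝ)), A t = ν (Ioi (n:ℝ)) := fun n =>
    (withDensity_apply _ measurableSet_Ioi).symm
  have h0 : ν (Ioi ((0:ℕ):ℝ)) ≠ ⊤ := by
    rw [← happ]; simpa using hfin
  have hanti : Antitone (fun n : ℕ => Ioi ((n:ℝ))) := fun n m hnm =>
    Ioi_subset_Ioi (by exact_mod_cast hnm)
  have hiInter : (⋂ n : ℕ, Ioi ((n:ℝ))) = ∅ := by
    ext t
    simp only [mem_iInter, mem_Ioi, mem_empty_iff_false, iff_false, not_forall, not_lt]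
    obtain ⟨n, hn⟩ := exists_nat_ge t
    exact ⟨n, hn⟩
  have := tendsto_measure_iInter_atTop (μ := ν)
    (fun n => measurableSet_Ioi.nullMeasurableSet) hanti ⟨0, h0⟩
  rw [hiInter, measure_empty] at this
  simpa only [Function.comp_def, happ] using this

lemma tendsto_head {A : ℝ → ℝ≥0∞} (hA : Measurable A)
    (hfin : ∫⁻ t in Ioi (0:ℝ), A t ≠ ⊤) :
    Tendsto (fun n : ℕ => ∫⁻ t in Ioc (0:ℝ) (1/((n:ℝ)+1)), A t) atTop (𝓝 0) := by
  set ν := volume.withDensity A with hν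
  have happ : ∀ n : ℕ, ∫⁻ t in Ioc (0:ℝ) (1/((n:ℝ)+1)), A t = ν (Ioc 0 (1/((n:ℝ)+1))) :=
    fun n => (withDensity_apply _ measurableSet_Ioc).symm
  have h0 : ν (Ioc (0:ℝ) (1/(((0:ℕ):ℝ)+1))) ≠ ⊤ := by
    refine ne_top_of_le_ne_top ?_ (measure_mono Ioc_subset_Ioi_self)
    rw [show ν (Ioi (0:ℝ)) = ∫⁻ t in Ioi (0:ℝ), A t from withDensity_apply _ measurableSet_Ioi]
    exact hfin
  have hanti : Antitone (fun n : ℕ => Ioc (0:ℝ) (1/((n:ℝ)+1))) := by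
    intro n m hnm
    apply Ioc_subset_Ioc_right
    have : ((n:ℝ)+1) ≤ ((m:ℝ)+1) := by exact_mod_cast Nat.succ_le_succ hnm
    exact one_div_le_one_div_of_le (by positivity) this
  have hiInter : (⋂ n : ℕ, Ioc (0:ℝ) (1/((n:ℝ)+1))) = ∅ := by
    ext t
    simp only [mem_iInter, mem_Ioc, mem_empty_iff_false, iff_false, not_forall]
    by_cases ht : 0 < t
    · obtain ⟨n, hn⟩ := exists_nat_one_div_lt ht
      exact ⟨n, fun h => absurd h.2 (not_le.mpr hn)⟩
    · exact ⟨0, fun h => ht h.1⟩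
  have := tendsto_measure_iInter_atTop (μ := ν)
    (fun n => measurableSet_Ioc.nullMeasurableSet) hanti ⟨0, h0⟩
  rw [hiInter, measure_empty] at this
  simpa only [Function.comp_def, happ] using this

lemma A_ne_top {A : ℝ → ℝ≥0∞} (hA : Measurable A) (hanti : Antitone A)
    (hfin : ∫⁻ t in Ioi (0:ℝ), A t ≠ ⊤) {t : ℝ} (ht : 0 < t) : A t ≠ ⊤ := by
  intro htop
  apply hfin
  rw [eq_top_iff]
  calc (⊤:ℝ≥0∞) = A t * volume (Ioc (0:ℝ) t) := by
        rw [htop, ENNReal.top_mul]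
        simp [Real.volume_Ioc, ht, ENNReal.ofReal_pos.mpr ht |>.ne']
    _ = ∫⁻ _ in Ioc (0:ℝ) t, A t := (setLIntegral_const _ _).symm
    _ ≤ ∫⁻ s in Ioc (0:ℝ) t, A s := setLIntegral_mono hA (fun s hs => hanti hs.2)
    _ ≤ ∫⁻ s in Ioi (0:ℝ), A s := lintegral_mono_set Ioc_subset_Ioi_self

end ChoquetAux7

namespace ChoquetAux7

lemma ofReal_lt_extract {a b : ℝ} (ha : 0 ≤ a)
    (h : ENNReal.ofReal a < ENNReal.ofReal b) : a < b := by
  by_contra hab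
  exact absurd (ENNReal.ofReal_le_ofReal (not_lt.mp hab)) (not_le.mpr h)

lemma abs_sub_le_abs_add_abs (a b : ℝ) : |a - b| ≤ |a| + |b| := by
  rw [sub_eq_add_neg]
  exact (abs_add_le _ _).trans (by rw [abs_neg])

set_option maxHeartbeats 1000000 in
lemma key {d : ℕ} (H : Set (EuclideanSpace ℝ (Fin d)) → ℝ≥0∞)
    (hmono : MonotoneSF H) (hsub : FinitelySubadditive H) (hev : Evanescent H)
    (f : EuclideanSpace ℝ (Fin d) → EReal) (hf : QuasicontinuousE H f)
    (hint : choquet H (fun x => (f x).abs) < ⊤) (ε : ℝ) (hε : 0 < ε) :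
    ∃ φ : EuclideanSpace ℝ (Fin d) → ℝ, Continuous φ ∧ HasCompactSupport φ ∧
      choquet H (fun x => ((φ x : EReal) - f x).abs) ≤ ENNReal.ofReal ε := by
  classical
  set A : ℝ → ℝ≥0∞ := fun t => H {x | ENNReal.ofReal t < (f x).abs} with hA_def
  have hAanti : Antitone A := fun s t hst =>
    hmono (fun x hx => lt_of_le_of_lt (ENNReal.ofReal_le_ofReal hst) hx)
  have hAmeas : Measurable A := hAanti.measurable
  have hCfin : ∫⁻ t in Ioi (0:ℝ), A t ≠ ⊤ := by
    simpa [choquet, hA_def] using hint.ne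
  -- choice of M
  have hM8 : (0:ℝ≥0∞) < ENNReal.ofReal (ε/8) := ENNReal.ofReal_pos.mpr (by positivity)
  obtain ⟨n₁, hn₁⟩ := (((tendsto_tail hAmeas hCfin).eventually_lt_const hM8).and
      (eventually_ge_atTop 1)).exists
  set M : ℝ := (n₁ : ℝ) with hM_def
  have hM1 : 1 ≤ M := by rw [hM_def]; exact_mod_cast hn₁.2
  have hM0 : 0 < M := lt_of_lt_of_le one_pos hM1
  have htail : ∫⁻ t in Ioi M, A t ≤ ENNReal.ofReal (ε/8) := hn₁.1.le
  -- choice of δ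
  have hM16 : (0:ℝ≥0∞) < ENNReal.ofReal (ε/16) := ENNReal.ofReal_pos.mpr (by positivity)
  obtain ⟨n₂, hn₂⟩ := (((tendsto_head hAmeas hCfin).eventually_lt_const hM16).and
      (eventually_ge_atTop 1)).exists
  set δ : ℝ := 1/((n₂ : ℝ)+1) with hδ_def
  have hδ0 : 0 < δ := by positivity
  have hδhalf : δ ≤ 1/2 := by
    rw [hδ_def]
    have h1 : (1:ℝ) ≤ (n₂ : ℝ) := by exact_mod_cast hn₂.2
    rw [div_le_div_iff₀ (by positivity) (by norm_num)]
    linarith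
  have hhead : ∫⁻ t in Ioc (0:ℝ) δ, A t ≤ ENNReal.ofReal (ε/16) := hn₂.1.le
  have h2δM : 2*δ ≤ M := by linarith
  -- quasicontinuity
  set ε' : ℝ := ε/(16*M) with hε'_def
  have hε'0 : 0 < ε' := by positivity
  obtain ⟨ω, hωopen, hωH, hωfin, hωcont⟩ := hf ε' hε'0
  set f₀ : EuclideanSpace ℝ (Fin d) → ℝ := fun x => (f x).toReal with hf₀_def
  have hf₀cont : ContinuousOn f₀ ωᶜ := by
    intro x hx
    exact (EReal.tendsto_toReal (hωfin x hx).1 (hωfin x hx).2).comp (hωcont x hx)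
  have hfeq : ∀ x ∈ ωᶜ, f x = ((f₀ x : ℝ) : EReal) := fun x hx =>
    (EReal.coe_toReal (hωfin x hx).1 (hωfin x hx).2).symm
  -- Tietze extension
  obtain ⟨G, hG⟩ := ContinuousMap.exists_restrict_eq (Y := ℝ) hωopen.isClosed_compl
    ⟨_, hf₀cont.restrict⟩
  have hgcont : Continuous G := G.continuous
  have hgeq : ∀ x ∈ ωᶜ, G x = f₀ x := by
    intro x hx
    have h1 := DFunLike.congr_fun hG ⟨x, hx⟩
    simpa using h1
  -- the closed set F and open superset U
  set F : Set (EuclideanSpace ℝ (Fin d)) := ωᶜ ∩ f₀ ⁻¹' {y : ℝ | δ ≤ |y|} with hF_def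
  have hFclosed : IsClosed F :=
    hf₀cont.preimage_isClosed_of_isClosed hωopen.isClosed_compl
      (isClosed_le continuous_const continuous_abs)
  obtain ⟨V, hVopen, hVeq⟩ := (continuousOn_iff'.mp hf₀cont) {y : ℝ | δ/2 < |y|}
    (isOpen_lt continuous_const continuous_abs)
  set U : Set (EuclideanSpace ℝ (Fin d)) := ω ∪ V with hU_def
  have hUopen : IsOpen U := hωopen.union hVopen
  have habsf : ∀ x ∈ ωᶜ, (f x).abs = ENNReal.ofReal |f₀ x| := by
    intro x hx
    rw [hfeq x hx, EReal.abs_def]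
  have hFU : F ⊆ U := by
    intro x hx
    have hx2 : δ ≤ |f₀ x| := hx.2
    have hmem : x ∈ f₀ ⁻¹' {y : ℝ | δ/2 < |y|} ∩ ωᶜ :=
      ⟨by simp only [mem_preimage, mem_setOf_eq]; linarith, hx.1⟩
    rw [hVeq] at hmem
    exact Or.inr hmem.1
  have hωlt : H ω < ⊤ := lt_of_le_of_lt hωH ENNReal.ofReal_lt_top
  have hUfin : H U < ⊤ := by
    have hVsub : V ⊆ ω ∪ {x | ENNReal.ofReal (δ/2) < (f x).abs} := by
      intro x hxV
      by_cases hxω : x ∈ ω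
      · exact Or.inl hxω
      · have hxc : x ∈ ωᶜ := hxω
        have hmem : x ∈ f₀ ⁻¹' {y : ℝ | δ/2 < |y|} ∩ ωᶜ := by
          rw [hVeq]; exact ⟨hxV, hxc⟩
        have h2 : δ/2 < |f₀ x| := hmem.1
        refine Or.inr ?_
        show ENNReal.ofReal (δ/2) < (f x).abs
        rw [habsf x hxc]
        exact (ENNReal.ofReal_lt_ofReal_iff (by linarith)).mpr h2
    have hV : H V ≤ H ω + A (δ/2) := (hmono hVsub).trans (hsub _ _)
    have hAδ2 : A (δ/2) ≠ ⊤ := A_ne_top hAmeas hAanti hCfin (by positivity)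
    calc H U ≤ H ω + H V := hsub _ _
      _ ≤ H ω + (H ω + A (δ/2)) := add_le_add_right hV _
      _ < ⊤ := by
          refine ENNReal.add_lt_top.mpr ⟨hωlt, ENNReal.add_lt_top.mpr ⟨hωlt, ?_⟩⟩
          exact lt_top_iff_ne_top.mpr hAδ2
  -- evanescence: choice of r
  have hε'pos : (0:ℝ≥0∞) < ENNReal.ofReal ε' := ENNReal.ofReal_pos.mpr hε'0
  obtain ⟨r, hr⟩ := ((hev U hUopen hUfin F hFclosed hFU).eventually_lt_const hε'pos).exists
  -- cutoff χ and clamp T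
  set χ : EuclideanSpace ℝ (Fin d) → ℝ := fun x => max 0 (min 1 (r + 1 - ‖x‖)) with hχ_def
  have hχcont : Continuous χ :=
    continuous_const.max (continuous_const.min (continuous_const.sub continuous_norm))
  have hχ01 : ∀ x, 0 ≤ χ x ∧ χ x ≤ 1 := fun x =>
    ⟨le_max_left _ _, max_le (by norm_num) (min_le_left _ _)⟩
  have hχ1 : ∀ x, ‖x‖ < r → χ x = 1 := by
    intro x hx
    rw [hχ_def]
    simp only
    rw [min_eq_left (by linarith : (1:ℝ) ≤ r + 1 - ‖x‖)]
    norm_num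
  have hχ0 : ∀ x, r + 1 ≤ ‖x‖ → χ x = 0 := by
    intro x hx
    rw [hχ_def]
    simp only
    rw [max_eq_left ((min_le_right _ _).trans (by linarith : r + 1 - ‖x‖ ≤ 0))]
  set T : ℝ → ℝ := fun y => max (-M) (min M y) with hT_def
  have hTcont : Continuous T := continuous_const.max (continuous_const.min continuous_id)
  have hTabs : ∀ y, |T y| ≤ M := by
    intro y
    rw [abs_le]
    exact ⟨le_max_left _ _, max_le (by linarith) (min_le_left _ _)⟩
  have hTeq : ∀ y, |y| ≤ M → T y = y := by
    intro y hy
    rw [abs_le] at hy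
    rw [hT_def]
    simp only
    rw [min_eq_right hy.2, max_eq_right hy.1]
  have hTle : ∀ y, |T y| ≤ |y| := by
    intro y
    rcases le_total (|y|) M with h | h
    · rw [hTeq y h]
    · exact (hTabs y).trans h
  have hTfar : ∀ y t, 0 ≤ t → t < |T y - y| → M + t < |y| := by
    intro y t ht hlt
    rcases le_total (|y|) M with h | h
    · rw [hTeq y h, sub_self, abs_zero] at hlt; linarith
    · rcases le_total 0 y with hy | hy
      · have hyy : |y| = y := abs_of_nonneg hy
        rw [hyy] at h ⊢
        have hTy : T y = M := by
          rw [hT_def]; simp only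
          rw [min_eq_left h, max_eq_right (by linarith)]
        rw [hTy, abs_of_nonpos (by linarith)] at hlt
        linarith
      · have hyy : |y| = -y := abs_of_nonpos hy
        rw [hyy] at h ⊢
        have hTy : T y = -M := by
          rw [hT_def]; simp only
          rw [min_eq_right (by linarith), max_eq_left (by linarith)]
        rw [hTy, abs_of_nonneg (by linarith)] at hlt
        linarith
  -- the approximation
  set φ : EuclideanSpace ℝ (Fin d) → ℝ := fun x => χ x * T (G x) with hφ_def
  have hφcont : Continuous φ := hχcont.mul (hTcont.comp hgcont)
  have hφsupp : HasCompactSupport φ := by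
    apply HasCompactSupport.intro (isCompact_closedBall (0 : EuclideanSpace ℝ (Fin d)) (r+1))
    intro x hx
    have hxn : r + 1 ≤ ‖x‖ := by
      simp only [Metric.mem_closedBall, dist_zero_right, not_le] at hx
      exact hx.le
    rw [hφ_def]
    simp only
    rw [hχ0 x hxn, zero_mul]
  have hφM : ∀ x, |φ x| ≤ M := by
    intro x
    rw [hφ_def]
    simp only
    rw [abs_mul]
    calc |χ x| * |T (G x)| ≤ 1 * M := by
          apply mul_le_mul _ (hTabs _) (abs_nonneg _) one_pos.le
          rw [abs_of_nonneg (hχ01 x).1]; exact (hχ01 x).2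
      _ = M := one_mul M
  have hφle : ∀ x, |φ x| ≤ |T (G x)| := by
    intro x
    rw [hφ_def]
    simp only
    rw [abs_mul]
    calc |χ x| * |T (G x)| ≤ 1 * |T (G x)| := by
          apply mul_le_mul_of_nonneg_right _ (abs_nonneg _)
          rw [abs_of_nonneg (hχ01 x).1]; exact (hχ01 x).2
      _ = |T (G x)| := one_mul _
  have habsd : ∀ x ∈ ωᶜ, ((φ x : EReal) - f x).abs = ENNReal.ofReal |φ x - f₀ x| := by
    intro x hx
    rw [hfeq x hx, ← EReal.coe_sub, EReal.abs_def]
  set S : ℝ → Set (EuclideanSpace ℝ (Fin d)) :=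
    fun t => {x | ENNReal.ofReal t < ((φ x : EReal) - f x).abs} with hS_def
  -- core dichotomy
  have hcore : ∀ t, 0 < t → ∀ x, x ∈ S t → x ∉ ω → x ∉ F \ Metric.ball 0 r →
      (M + t < |f₀ x|) ∨ (|f₀ x| < δ ∧ t < 2*|f₀ x|) := by
    intro t ht x hxS hxω hxF
    have hxc : x ∈ ωᶜ := hxω
    have hx' : ENNReal.ofReal t < ENNReal.ofReal |φ x - f₀ x| := by
      rw [← habsd x hxc]; exact hxS
    have hlt : t < |φ x - f₀ x| := ofReal_lt_extract ht.le hx'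
    by_cases hxr : ‖x‖ < r
    · left
      have hφx : φ x = T (f₀ x) := by
        rw [hφ_def]; simp only
        rw [hχ1 x hxr, one_mul, hgeq x hxc]
      rw [hφx] at hlt
      exact hTfar _ _ ht.le hlt
    · right
      have hxball : x ∉ Metric.ball (0 : EuclideanSpace ℝ (Fin d)) r := by
        simp only [Metric.mem_ball, dist_zero_right]
        exact hxr
      have hsmall : |f₀ x| < δ := by
        by_contra hge
        exact hxF ⟨⟨hxc, not_lt.mp hge⟩, hxball⟩
      refine ⟨hsmall, ?_⟩
      have h1 : |φ x - f₀ x| ≤ |φ x| + |f₀ x| := abs_sub_le_abs_add_abs _ _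
      have h2 : |φ x| ≤ |f₀ x| := by
        calc |φ x| ≤ |T (G x)| := hφle x
          _ = |T (f₀ x)| := by rw [hgeq x hxc]
          _ ≤ |f₀ x| := hTle _
      linarith
  set c : ℝ≥0∞ := H ω + H (F \ Metric.ball 0 r) with hc_def
  -- the three H-bounds
  have hglobal : ∀ t ∈ Ioi (2*M), H (S t) ≤ A (t + -M) := by
    intro t ht
    rw [mem_Ioi] at ht
    apply hmono
    intro x hx
    rw [hS_def] at hx
    simp only [mem_setOf_eq] at hx ⊢
    by_cases hfx : f x = ⊤ ∨ f x = ⊥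
    · have habs : (f x).abs = ⊤ := by rcases hfx with h|h <;> simp [h]
      rw [habs]; exact ENNReal.ofReal_lt_top
    · push_neg at hfx
      have hco : f x = ((f x).toReal : EReal) := (EReal.coe_toReal hfx.1 hfx.2).symm
      rw [hco, ← EReal.coe_sub, EReal.abs_def] at hx
      have ht0 : 0 < t := by linarith
      have h1 : t < |φ x - (f x).toReal| := ofReal_lt_extract ht0.le hx
      have h2 : |φ x - (f x).toReal| ≤ M + |(f x).toReal| :=
        (abs_sub_le_abs_add_abs _ _).trans (add_le_add_left (hφM x) _)
      have h3 : t + -M < |(f x).toReal| := by linarith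
      have h4 : 0 < |(f x).toReal| := by linarith
      rw [hco, EReal.abs_def]
      exact (ENNReal.ofReal_lt_ofReal_iff h4).mpr h3
  have hmid : ∀ t ∈ Ioc (2*δ) (2*M), H (S t) ≤ c + A (t + (M - 2*δ)) := by
    intro t ht
    rw [hc_def, add_assoc]
    refine le_trans (hmono ?_) ((hsub _ _).trans (add_le_add_right (hsub _ _) _))
    intro x hx
    by_cases h1 : x ∈ ω
    · exact Or.inl h1
    by_cases h2 : x ∈ F \ Metric.ball 0 r
    · exact Or.inr (Or.inl h2)
    have ht0 : 0 < t := lt_trans (by positivity) ht.1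
    rcases hcore t ht0 x hx h1 h2 with hbig | ⟨hsm, h2f⟩
    · refine Or.inr (Or.inr ?_)
      show ENNReal.ofReal (t + (M - 2*δ)) < (f x).abs
      rw [habsf x h1]
      exact (ENNReal.ofReal_lt_ofReal_iff (by linarith)).mpr (by linarith)
    · exact absurd ht.1 (by linarith)
  have hlow : ∀ t ∈ Ioc (0:ℝ) (2*δ), H (S t) ≤ c + A (t/2) := by
    intro t ht
    have ht0 : 0 < t := ht.1
    rw [hc_def, add_assoc]
    refine le_trans (hmono ?_) ((hsub _ _).trans (add_le_add_right (hsub _ _) _))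
    intro x hx
    by_cases h1 : x ∈ ω
    · exact Or.inl h1
    by_cases h2 : x ∈ F \ Metric.ball 0 r
    · exact Or.inr (Or.inl h2)
    rcases hcore t ht0 x hx h1 h2 with hbig | ⟨hsm, h2f⟩
    · refine Or.inr (Or.inr ?_)
      show ENNReal.ofReal (t/2) < (f x).abs
      rw [habsf x h1]
      refine (ENNReal.ofReal_lt_ofReal_iff (by linarith)).mpr (by nlinarith [ht.1, hM0])
    · refine Or.inr (Or.inr ?_)
      show ENNReal.ofReal (t/2) < (f x).abs
      rw [habsf x h1]
      exact (ENNReal.ofReal_lt_ofReal_iff (by linarith)).mpr (by linarith)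
  -- split the integral
  have hsplitset : Ioi (0:ℝ) ⊆ (Ioc 0 (2*δ) ∪ Ioc (2*δ) (2*M)) ∪ Ioi (2*M) := by
    intro t ht
    rw [mem_Ioi] at ht
    by_cases h1 : t ≤ 2*δ
    · exact Or.inl (Or.inl ⟨ht, h1⟩)
    by_cases h2 : t ≤ 2*M
    · exact Or.inl (Or.inr ⟨not_le.mp h1, h2⟩)
    · exact Or.inr (not_le.mp h2)
  have hmeas_le : volume.restrict (Ioi (0:ℝ)) ≤
      (volume.restrict (Ioc (0:ℝ) (2*δ)) + volume.restrict (Ioc (2*δ) (2*M)))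
        + volume.restrict (Ioi (2*M)) := by
    refine le_trans (Measure.restrict_mono hsplitset le_rfl) ?_
    refine le_trans (Measure.restrict_union_le _ _) ?_
    exact add_le_add_left (Measure.restrict_union_le _ _) _
  have hsplit : ∫⁻ t in Ioi (0:ℝ), H (S t) ≤
      ((∫⁻ t in Ioc (0:ℝ) (2*δ), H (S t)) + (∫⁻ t in Ioc (2*δ) (2*M), H (S t)))
        + ∫⁻ t in Ioi (2*M), H (S t) := by
    calc ∫⁻ t in Ioi (0:ℝ), H (S t)
        ≤ ∫⁻ t, H (S t) ∂((volume.restrict (Ioc (0:ℝ) (2*δ))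
            + volume.restrict (Ioc (2*δ) (2*M))) + volume.restrict (Ioi (2*M))) :=
          lintegral_mono' hmeas_le le_rfl
      _ = _ := by rw [lintegral_add_measure, lintegral_add_measure]
  -- bound the three pieces
  have hI3 : ∫⁻ t in Ioi (2*M), H (S t) ≤ ENNReal.ofReal (ε/8) := by
    calc ∫⁻ t in Ioi (2*M), H (S t) ≤ ∫⁻ t in Ioi (2*M), A (t + -M) :=
        setLIntegral_mono (hAmeas.comp (measurable_id.add_const _)) hglobal
      _ = ∫⁻ s in Ioi (2*M + -M), A s := lintegral_Ioi_shift hAmeas _ _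
      _ = ∫⁻ s in Ioi M, A s := by rw [show 2*M + -M = M by ring]
      _ ≤ ENNReal.ofReal (ε/8) := htail
  have hI2 : ∫⁻ t in Ioc (2*δ) (2*M), H (S t)
      ≤ c * ENNReal.ofReal (2*M - 2*δ) + ENNReal.ofReal (ε/8) := by
    calc ∫⁻ t in Ioc (2*δ) (2*M), H (S t)
        ≤ ∫⁻ t in Ioc (2*δ) (2*M), (c + A (t + (M - 2*δ))) :=
          setLIntegral_mono (measurable_const.add (hAmeas.comp (measurable_id.add_const _))) hmid
      _ = c * volume (Ioc (2*δ) (2*M)) + ∫⁻ t in Ioc (2*δ) (2*M), A (t + (M - 2*δ)) := by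
          rw [lintegral_add_left measurable_const, setLIntegral_const]
      _ ≤ c * ENNReal.ofReal (2*M - 2*δ) + ∫⁻ t in Ioi (2*δ), A (t + (M - 2*δ)) := by
          rw [Real.volume_Ioc]
          exact add_le_add_right (lintegral_mono_set Ioc_subset_Ioi_self) _
      _ = c * ENNReal.ofReal (2*M - 2*δ) + ∫⁻ s in Ioi (2*δ + (M - 2*δ)), A s := by
          rw [lintegral_Ioi_shift hAmeas]
      _ = c * ENNReal.ofReal (2*M - 2*δ) + ∫⁻ s in Ioi M, A s := by
          rw [show 2*δ + (M - 2*δ) = M by ring]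
      _ ≤ c * ENNReal.ofReal (2*M - 2*δ) + ENNReal.ofReal (ε/8) := add_le_add_right htail _
  have hI1 : ∫⁻ t in Ioc (0:ℝ) (2*δ), H (S t)
      ≤ c * ENNReal.ofReal (2*δ) + ENNReal.ofReal (ε/8) := by
    calc ∫⁻ t in Ioc (0:ℝ) (2*δ), H (S t)
        ≤ ∫⁻ t in Ioc (0:ℝ) (2*δ), (c + A (t/2)) :=
          setLIntegral_mono (measurable_const.add (hAmeas.comp (measurable_id.div_const _))) hlow
      _ = c * volume (Ioc (0:ℝ) (2*δ)) + ∫⁻ t in Ioc (0:ℝ) (2*δ), A (t/2) := by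
          rw [lintegral_add_left measurable_const, setLIntegral_const]
      _ = c * ENNReal.ofReal (2*δ) + 2 * ∫⁻ s in Ioc (0:ℝ) δ, A s := by
          rw [Real.volume_Ioc, lintegral_Ioc_half hAmeas hδ0, sub_zero]
      _ ≤ c * ENNReal.ofReal (2*δ) + 2 * ENNReal.ofReal (ε/16) := by
          exact add_le_add_right (mul_le_mul_right hhead 2) _
      _ = c * ENNReal.ofReal (2*δ) + ENNReal.ofReal (ε/8) := by
          congr 1
          rw [show (2:ℝ≥0∞) = ENNReal.ofReal 2 by norm_num,
            ← ENNReal.ofReal_mul (by norm_num), show (2:ℝ)*(ε/16) = ε/8 by ring]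
  -- bound on c
  have hc : c ≤ ENNReal.ofReal (ε/(8*M)) := by
    rw [hc_def]
    calc H ω + H (F \ Metric.ball 0 r) ≤ ENNReal.ofReal ε' + ENNReal.ofReal ε' :=
        add_le_add hωH hr.le
      _ = ENNReal.ofReal (ε' + ε') := (ENNReal.ofReal_add hε'0.le hε'0.le).symm
      _ = ENNReal.ofReal (ε/(8*M)) := by
          rw [hε'_def]
          congr 1
          field_simp
          ring
  refine ⟨φ, hφcont, hφsupp, ?_⟩
  have hch : choquet H (fun x => ((φ x : EReal) - f x).abs) = ∫⁻ t in Ioi (0:ℝ), H (S t) := rfl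
  rw [hch]
  refine hsplit.trans ?_
  calc ((∫⁻ t in Ioc (0:ℝ) (2*δ), H (S t)) + (∫⁻ t in Ioc (2*δ) (2*M), H (S t)))
        + ∫⁻ t in Ioi (2*M), H (S t)
      ≤ ((c * ENNReal.ofReal (2*δ) + ENNReal.ofReal (ε/8))
          + (c * ENNReal.ofReal (2*M - 2*δ) + ENNReal.ofReal (ε/8)))
        + ENNReal.ofReal (ε/8) := add_le_add (add_le_add hI1 hI2) hI3
    _ = c * (ENNReal.ofReal (2*δ) + ENNReal.ofReal (2*M - 2*δ))
        + (ENNReal.ofReal (ε/8) + ENNReal.ofReal (ε/8) + ENNReal.ofReal (ε/8)) := by ring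
    _ = c * ENNReal.ofReal (2*M) + (ENNReal.ofReal (ε/8) + ENNReal.ofReal (ε/8)
        + ENNReal.ofReal (ε/8)) := by
        rw [← ENNReal.ofReal_add (by positivity) (by linarith), show 2*δ + (2*M - 2*δ) = 2*M by ring]
    _ ≤ ENNReal.ofReal (ε/(8*M)) * ENNReal.ofReal (2*M) + (ENNReal.ofReal (ε/8)
        + ENNReal.ofReal (ε/8) + ENNReal.ofReal (ε/8)) := by
        exact add_le_add_left (mul_le_mul_left hc _) _
    _ = ENNReal.ofReal (ε/(8*M) * (2*M)) + (ENNReal.ofReal (ε/8 + ε/8) + ENNReal.ofReal (ε/8)) := by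
        rw [← ENNReal.ofReal_mul (by positivity), ← ENNReal.ofReal_add (by positivity) (by positivity)]
    _ = ENNReal.ofReal (ε/4) + ENNReal.ofReal (ε/8 + ε/8 + ε/8) := by
        rw [show ε/(8*M) * (2*M) = ε/4 by field_simp; ring,
          ← ENNReal.ofReal_add (by positivity) (by positivity)]
    _ = ENNReal.ofReal (ε/4 + (ε/8 + ε/8 + ε/8)) :=
        (ENNReal.ofReal_add (by positivity) (by positivity)).symm
    _ ≤ ENNReal.ofReal ε := ENNReal.ofReal_le_ofReal (by linarith)

end ChoquetAux7

/-- Approximation of quasicontinuous functions with finite Choquet integral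
by continuous compactly supported functions, under evanescence. -/
theorem quasicontinuous_approx_compactSupport {d : ℕ}
    (H : Set (EuclideanSpace ℝ (Fin d)) → ℝ≥0∞)
    (hmono : MonotoneSF H) (hsub : FinitelySubadditive H) (hev : Evanescent H)
    (f : EuclideanSpace ℝ (Fin d) → EReal) (hf : QuasicontinuousE H f)
    (hint : choquet H (fun x => (f x).abs) < ⊤) :
    ∃ φ : ℕ → EuclideanSpace ℝ (Fin d) → ℝ,
      (∀ n, Continuous (φ n) ∧ HasCompactSupport (φ n)) ∧
      Filter.Tendsto (fun n => choquet H (fun x => ((φ n x : EReal) - f x).abs))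
        Filter.atTop (nhds 0) := by
  have hkey := fun n : ℕ =>
    ChoquetAux7.key H hmono hsub hev f hf hint (1/((n:ℝ)+1)) (by positivity)
  choose φ hφc hφs hφb using hkey
  refine ⟨φ, fun n => ⟨hφc n, hφs n⟩, ?_⟩
  have h0 : Tendsto (fun n : ℕ => ENNReal.ofReal (1/((n:ℝ)+1))) atTop (𝓝 0) := by
    have := ENNReal.tendsto_ofReal (tendsto_one_div_add_atTop_nhds_zero_nat)
    simpa using this
  exact tendsto_of_tendsto_of_tendsto_of_le_of_le tendsto_const_nhds h0
    (fun n => zero_le) hφb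
end

section
/- Suppose H : 𝒫(ℝ^d) → [0,∞] is strongly subadditive. Then for every n ≥ 1 and all sets C_1, …, C_n ⊆ ℝ^d, there exist sets D_1, …, D_{n−1} ⊆ D_n ⊆ ℝ^d such that ∑_{i=1}^n χ_{D_i} = ∑_{i=1}^n χ_{C_i} pointwise and ∑_{i=1}^n H(D_i) ≤ ∑_{i=1}^n H(C_i). -/
open MeasureTheory Filter Set Topology
open scoped ENNReal

/-- Minimization lemma for strongly subadditive set functions: the sets
`C_1, …, C_n` may be replaced by sets `D_1, …, D_{n-1} ⊆ D_n` with the same sum of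
characteristic functions and no larger total capacity. -/
theorem stronglySubadditive_rearrangement {d : ℕ}
    (H : Set (EuclideanSpace ℝ (Fin d)) → ℝ≥0∞) (hssa : StronglySubadditive H) :
    ∀ (n : ℕ) (C : Fin (n + 1) → Set (EuclideanSpace ℝ (Fin d))),
      ∃ D : Fin (n + 1) → Set (EuclideanSpace ℝ (Fin d)),
        (∀ i, D i ⊆ D (Fin.last n)) ∧
        (∀ x, (∑ i, (D i).indicator (fun _ => (1 : ℕ)) x) =
          ∑ i, (C i).indicator (fun _ => (1 : ℕ)) x) ∧
        ∑ i, H (D i) ≤ ∑ i, H (C i) := by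
  intro n
  induction n with
  | zero =>
    intro C
    refine ⟨C, fun i => ?_, fun x => rfl, le_rfl⟩
    have hi : i = Fin.last 0 := Fin.ext (Nat.lt_one_iff.mp i.isLt)
    rw [hi]
  | succ n ih =>
    intro C
    set A := C 0 with hA
    set B := C (Fin.last (n + 1)) with hB
    set C' : Fin (n + 1) → Set (EuclideanSpace ℝ (Fin d)) :=
      fun i => if i = Fin.last n then A ∪ B else C i.succ with hC'
    obtain ⟨D', hsub, hind, hH⟩ := ih C'
    have hClast : C' (Fin.last n) = A ∪ B := if_pos rfl
    -- The last D' contains A ∪ B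
    have hUnionSub : A ∪ B ⊆ D' (Fin.last n) := by
      intro x hx
      by_contra hnx
      have hzero : ∀ i, x ∉ D' i := fun i hxi => hnx (hsub i hxi)
      have h1 : (∑ i, (D' i).indicator (fun _ => (1 : ℕ)) x) = 0 := by
        apply Finset.sum_eq_zero; intro i _
        exact Set.indicator_of_notMem (hzero i) _
      have h2 := hind x
      rw [h1] at h2
      have hone : (C' (Fin.last n)).indicator (fun _ => (1 : ℕ)) x = 1 := by
        rw [hClast, Set.indicator_of_mem hx]
      have hle : (C' (Fin.last n)).indicator (fun _ => (1 : ℕ)) x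
          ≤ ∑ i, (C' i).indicator (fun _ => (1 : ℕ)) x := Finset.single_le_sum (f := fun i => (C' i).indicator (fun _ => (1 : ℕ)) x)
        (fun i _ => Nat.zero_le _) (Finset.mem_univ (Fin.last n))
      omega
    refine ⟨Fin.cons (A ∩ B) D', ?_, ?_, ?_⟩
    · have hlast : (Fin.cons (A ∩ B) D' : Fin (n + 2) → Set (EuclideanSpace ℝ (Fin d)))
          (Fin.last (n + 1)) = D' (Fin.last n) := by
        rw [← Fin.succ_last, Fin.cons_succ]
      intro i
      rw [hlast]
      refine Fin.cases ?_ ?_ i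
      · rw [Fin.cons_zero]
        exact (Set.inter_subset_left.trans Set.subset_union_left).trans hUnionSub
      · intro j
        rw [Fin.cons_succ]
        exact hsub j
    · intro x
      rw [Fin.sum_univ_succ, Fin.sum_univ_succ (f := fun i => (C i).indicator (fun _ => (1 : ℕ)) x)]
      simp only [Fin.cons_zero, Fin.cons_succ]
      rw [hind x, Fin.sum_univ_castSucc,
        Fin.sum_univ_castSucc (f := fun i => (C i.succ).indicator (fun _ => (1 : ℕ)) x)]
      have hmid : ∀ j : Fin n, C' j.castSucc = C j.castSucc.succ := by
        intro j
        simp only [hC']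
        rw [if_neg (Fin.castSucc_lt_last j).ne]
      have hIU : (A ∩ B).indicator (fun _ => (1 : ℕ)) x + (A ∪ B).indicator (fun _ => (1 : ℕ)) x
          = A.indicator (fun _ => (1 : ℕ)) x + B.indicator (fun _ => (1 : ℕ)) x := by
        by_cases hxA : x ∈ A <;> by_cases hxB : x ∈ B <;>
          simp [Set.indicator_apply, Set.mem_inter_iff, Set.mem_union, hxA, hxB]
      simp only [hmid, hClast, Fin.succ_last]
      rw [← hB, ← hA]
      omega
    · rw [Fin.sum_univ_succ, Fin.sum_univ_succ (f := fun i => H (C i))]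
      simp only [Fin.cons_zero, Fin.cons_succ]
      have h1 : ∑ i, H (D' i) ≤ ∑ i, H (C' i) := hH
      have h2 : ∑ i : Fin (n + 1), H (C' i)
          = (∑ j : Fin n, H (C j.castSucc.succ)) + H (A ∪ B) := by
        rw [Fin.sum_univ_castSucc, hClast]
        congr 1
        apply Finset.sum_congr rfl
        intro j _
        congr 1
        simp only [hC']
        rw [if_neg (Fin.castSucc_lt_last j).ne]
      have h3 : ∑ i : Fin (n + 1), H (C i.succ)
          = (∑ j : Fin n, H (C j.castSucc.succ)) + H B := by
        rw [Fin.sum_univ_castSucc, Fin.succ_last, ← hB]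
      rw [h3]
      calc H (A ∩ B) + ∑ i, H (D' i)
          ≤ H (A ∩ B) + ((∑ j : Fin n, H (C j.castSucc.succ)) + H (A ∪ B)) := by
            rw [← h2]; exact add_le_add_right h1 _
        _ = (H (A ∩ B) + H (A ∪ B)) + ∑ j : Fin n, H (C j.castSucc.succ) := by ring
        _ ≤ (H A + H B) + ∑ j : Fin n, H (C j.castSucc.succ) :=
            add_le_add_left (hssa A B) _
        _ = H A + ((∑ j : Fin n, H (C j.castSucc.succ)) + H B) := by ring
end

section
/- Suppose H : 𝒫(ℝ^d) → [0,∞] is strongly subadditive. Let C_1, …, C_n ⊆ ℝ^d, and let A_1 ⊆ A_2 ⊆ … ⊆ A_n ⊆ ℝ^d be the nested family of sets satisfying ∑_{i=1}^n χ_{A_i} = ∑_{i=1}^n χ_{C_i} pointwise (so that A_i is the set of points belonging to at least n − i + 1 of the sets C_1, …, C_n). Then ∑_{i=1}^n H(A_i) ≤ ∑_{i=1}^n H(C_i). -/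
open MeasureTheory Filter Set Topology
open scoped ENNReal

section Aux
variable {α : Type*}

/-- The counting function: number of sets containing `x`. -/
noncomputable def cntF {m : ℕ} (C : Fin m → Set α) (x : α) : ℕ :=
  ∑ i, (C i).indicator (fun _ => 1) x

/-- Threshold sets. -/
def thrF {m : ℕ} (C : Fin m → Set α) (k : ℕ) : Set α := {x | k ≤ cntF C x}

lemma cntF_le {m : ℕ} (C : Fin m → Set α) (x : α) : cntF C x ≤ m := by
  classical
  calc cntF C x ≤ ∑ _i : Fin m, 1 := by
        apply Finset.sum_le_sum
        intro i _
        by_cases h : x ∈ C i <;> simp [Set.indicator_apply, h]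
    _ = m := by simp

lemma thrF_zero {m : ℕ} (C : Fin m → Set α) : thrF C 0 = Set.univ := by
  ext x; simp [thrF]

lemma thrF_anti {m : ℕ} (C : Fin m → Set α) {k l : ℕ} (h : k ≤ l) :
    thrF C l ⊆ thrF C k := fun x hx => le_trans h hx

lemma thrF_top {m : ℕ} (C : Fin m → Set α) : thrF C (m + 1) = ∅ := by
  ext x
  simp only [thrF, Set.mem_setOf_eq, Set.mem_empty_iff_false, iff_false, not_le]
  exact Nat.lt_succ_of_le (cntF_le C x)

lemma cntF_castSucc {m : ℕ} (C : Fin (m + 1) → Set α) (x : α) :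
    cntF C x = cntF (fun i : Fin m => C i.castSucc) x
      + (C (Fin.last m)).indicator (fun _ => 1) x := by
  simp [cntF, Fin.sum_univ_castSucc]

lemma thrF_succ {m : ℕ} (C : Fin (m + 1) → Set α) (k : ℕ) :
    thrF C (k + 1) = thrF (fun i : Fin m => C i.castSucc) (k + 1)
      ∪ (thrF (fun i : Fin m => C i.castSucc) k ∩ C (Fin.last m)) := by
  classical
  ext x
  by_cases h : x ∈ C (Fin.last m) <;>
    simp [thrF, cntF_castSucc, Set.indicator_apply, h] <;> omega

lemma key_lemma (H : Set α → ℝ≥0∞) (hssa : StronglySubadditive H) :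
    ∀ (m : ℕ) (C : Fin m → Set α),
      ∑ k ∈ Finset.range m, H (thrF C (k + 1)) ≤ ∑ i, H (C i) := by
  intro m
  induction m with
  | zero => simp
  | succ m ih =>
    intro C
    by_cases htop : ∑ i, H (C i) = ⊤
    · exact htop ▸ le_top
    set T : Fin m → Set α := fun i => C i.castSucc with hT
    set c := C (Fin.last m) with hc
    have hsplit : ∑ i, H (C i) = (∑ i, H (T i)) + H c := by
      rw [Fin.sum_univ_castSucc]
    have hTfin : (∑ i, H (T i)) ≠ ⊤ := fun h => htop (by rw [hsplit, h, top_add])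
    have hcfin : H c ≠ ⊤ := fun h => htop (by rw [hsplit, h, add_top])
    have hIH := ih T
    have hthrfin : ∀ k < m, H (thrF T (k + 1)) ≠ ⊤ := by
      intro k hk h
      apply hTfin
      have : H (thrF T (k + 1)) ≤ ∑ i, H (T i) :=
        le_trans (Finset.single_le_sum (f := fun k => H (thrF T (k + 1)))
          (fun _ _ => zero_le) (Finset.mem_range.mpr hk)) hIH
      exact top_le_iff.mp (h ▸ this)
    -- the strong subadditivity step
    have ssak : ∀ k, H (thrF T (k + 1) ∩ c) + H (thrF C (k + 1))
        ≤ H (thrF T (k + 1)) + H (thrF T k ∩ c) := by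
      intro k
      have h1 := hssa (thrF T (k + 1)) (thrF T k ∩ c)
      have e1 : thrF T (k + 1) ∩ (thrF T k ∩ c) = thrF T (k + 1) ∩ c := by
        rw [← Set.inter_assoc, Set.inter_eq_left.mpr (thrF_anti T (Nat.le_succ k))]
      have e2 : thrF T (k + 1) ∪ (thrF T k ∩ c) = thrF C (k + 1) := (thrF_succ C k).symm
      rwa [e1, e2] at h1
    -- finiteness of the correction terms
    have hfin : ∀ k < m, H (thrF T k ∩ c) ≠ ⊤ := by
      intro k
      induction k with
      | zero => intro _; rw [thrF_zero, Set.univ_inter]; exact hcfin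
      | succ k ihk =>
        intro hk
        have hk' : k < m := Nat.lt_of_succ_lt hk
        have h1 : H (thrF T (k + 1) ∩ c) ≤ H (thrF T (k + 1)) + H (thrF T k ∩ c) :=
          le_trans (le_add_right le_rfl) (ssak k)
        exact ne_top_of_le_ne_top (ENNReal.add_ne_top.mpr ⟨hthrfin k hk', ihk hk'⟩) h1
    -- notation for sums
    set G : ℝ≥0∞ := ∑ k ∈ Finset.range m, H (thrF C (k + 1)) with hG
    set P : ℝ≥0∞ := ∑ k ∈ Finset.range m, H (thrF T (k + 1) ∩ c) with hP
    set Q : ℝ≥0∞ := ∑ k ∈ Finset.range m, H (thrF T k ∩ c) with hQ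
    have hQfin : Q ≠ ⊤ := by
      rw [hQ]
      exact (ENNReal.sum_ne_top).mpr fun k hk => hfin k (Finset.mem_range.mp hk)
    have S1 : P + G ≤ (∑ k ∈ Finset.range m, H (thrF T (k + 1))) + Q := by
      rw [hP, hG, hQ, ← Finset.sum_add_distrib, ← Finset.sum_add_distrib]
      exact Finset.sum_le_sum fun k _ => ssak k
    have e3 : P + H (thrF T 0 ∩ c) = Q + H (thrF T m ∩ c) := by
      rw [hP, hQ, ← Finset.sum_range_succ' (fun k => H (thrF T k ∩ c)) m,
        ← Finset.sum_range_succ (fun k => H (thrF T k ∩ c)) m]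
    have hgoal_lhs : ∑ k ∈ Finset.range (m + 1), H (thrF C (k + 1))
        = G + H (thrF T m ∩ c) := by
      rw [Finset.sum_range_succ, hG]
      congr 1
      rw [thrF_succ C m, thrF_top, Set.empty_union]
    rw [hgoal_lhs, hsplit]
    have h0 : H (thrF T 0 ∩ c) = H c := by rw [thrF_zero, Set.univ_inter]
    have final : G + H (thrF T m ∩ c) + Q ≤ ((∑ i, H (T i)) + H c) + Q := by
      calc G + H (thrF T m ∩ c) + Q = G + (Q + H (thrF T m ∩ c)) := by ring
        _ = G + (P + H (thrF T 0 ∩ c)) := by rw [e3]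
        _ = (P + G) + H (thrF T 0 ∩ c) := by ring
        _ ≤ ((∑ k ∈ Finset.range m, H (thrF T (k + 1))) + Q) + H (thrF T 0 ∩ c) :=
            add_le_add S1 le_rfl
        _ ≤ ((∑ i, H (T i)) + Q) + H (thrF T 0 ∩ c) :=
            add_le_add (add_le_add hIH le_rfl) le_rfl
        _ = ((∑ i, H (T i)) + H c) + Q := by rw [h0]; ring
    exact (ENNReal.add_le_add_iff_right hQfin).mp final

lemma nested_eq_thr {n : ℕ} (C A : Fin (n + 1) → Set α)
    (hnested : ∀ i j : Fin (n + 1), i ≤ j → A i ⊆ A j)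
    (hsum : ∀ x, (∑ i, (A i).indicator (fun _ => (1 : ℕ)) x) =
      ∑ i, (C i).indicator (fun _ => (1 : ℕ)) x)
    (i : Fin (n + 1)) : A i = thrF C (n + 1 - i.val) := by
  classical
  ext x
  have hcC : cntF C x = cntF A x := (hsum x).symm
  have hcard : cntF A x = (Finset.univ.filter (fun j => x ∈ A j)).card := by
    rw [Finset.card_filter]
    simp [cntF, Set.indicator_apply]
  simp only [thrF, Set.mem_setOf_eq, hcC]
  constructor
  · intro hx
    have hsub : Finset.Ici i ⊆ Finset.univ.filter (fun j => x ∈ A j) := by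
      intro j hj
      simp only [Finset.mem_filter, Finset.mem_univ, true_and]
      exact hnested i j (Finset.mem_Ici.mp hj) hx
    have := Finset.card_le_card hsub
    rw [Fin.card_Ici] at this
    omega
  · intro hx
    by_contra hnx
    have hsub : Finset.univ.filter (fun j => x ∈ A j) ⊆ Finset.Ioi i := by
      intro j hj
      simp only [Finset.mem_filter, Finset.mem_univ, true_and] at hj
      rw [Finset.mem_Ioi]
      by_contra hji
      exact hnx (hnested j i (le_of_not_gt hji) hj)
    have := Finset.card_le_card hsub
    rw [Fin.card_Ioi] at this
    have hi : i.val ≤ n := Nat.lt_succ_iff.mp i.isLt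
    omega

end Aux

/-- For a strongly subadditive set function, the nested rearrangement
`A_1 ⊆ … ⊆ A_n` with the same sum of characteristic functions as `C_1, …, C_n` has no
larger total capacity. -/
theorem stronglySubadditive_nested_rearrangement {d : ℕ}
    (H : Set (EuclideanSpace ℝ (Fin d)) → ℝ≥0∞) (hssa : StronglySubadditive H)
    (n : ℕ) (C A : Fin (n + 1) → Set (EuclideanSpace ℝ (Fin d)))
    (hnested : ∀ i j : Fin (n + 1), i ≤ j → A i ⊆ A j)
    (hsum : ∀ x, (∑ i, (A i).indicator (fun _ => (1 : ℕ)) x) =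
      ∑ i, (C i).indicator (fun _ => (1 : ℕ)) x) :
    ∑ i, H (A i) ≤ ∑ i, H (C i) := by
  have hA : ∀ i : Fin (n + 1), A i = thrF C (n + 1 - i.val) :=
    nested_eq_thr C A hnested hsum
  have e1 : ∑ i, H (A i) = ∑ k ∈ Finset.range (n + 1), H (thrF C (n + 1 - k)) := by
    rw [← Fin.sum_univ_eq_sum_range (fun k => H (thrF C (n + 1 - k))) (n + 1)]
    exact Finset.sum_congr rfl fun i _ => by rw [hA i]
  have e2 : ∑ k ∈ Finset.range (n + 1), H (thrF C (n + 1 - k))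
      = ∑ k ∈ Finset.range (n + 1), H (thrF C (k + 1)) := by
    rw [← Finset.sum_range_reflect (fun k => H (thrF C (k + 1))) (n + 1)]
    refine Finset.sum_congr rfl fun k hk => ?_
    have hk' := Finset.mem_range.mp hk
    have h : n + 1 - k = (n + 1 - 1 - k) + 1 := by omega
    rw [h]
  rw [e1, e2]
  exact key_lemma H hssa (n + 1) C
end

section
/- Suppose H : 𝒫(ℝ^d) → [0,∞] is monotone and strongly subadditive. If f, g : ℝ^d → ℕ/k := {m/k : m ∈ ℕ} for some positive integer k, then ∫(f+g) dH ≤ ∫f dH + ∫g dH. -/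
open MeasureTheory Filter Set Topology
open scoped ENNReal

section ChoquetAux

variable {α : Type*} {k : ℕ}

/-- The level set `{x : j/k ≤ f x}`. -/
def clev (k : ℕ) (f : α → ℝ≥0∞) (j : ℕ) : Set α := {x | (j : ℝ≥0∞) / (k : ℝ≥0∞) ≤ f x}

/-- The discrete layer-cake sum `∑ⱼ H {f ≥ (j+1)/k}`. -/
noncomputable def cSsum (H : Set α → ℝ≥0∞) (k : ℕ) (f : α → ℝ≥0∞) : ℝ≥0∞ :=
  ∑' j : ℕ, H (clev k f (j + 1))

lemma cdiv_le_cdiv (hk : k ≠ 0) {i j : ℕ} : (i : ℝ≥0∞) / k ≤ (j : ℝ≥0∞) / k ↔ i ≤ j := by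
  rw [ENNReal.div_le_iff (by exact_mod_cast hk) (by simp),
    ENNReal.div_mul_cancel (by exact_mod_cast hk) (by simp), Nat.cast_le]

lemma mem_clev (hk : k ≠ 0) {f : α → ℝ≥0∞} {x : α} {m j : ℕ} (hm : f x = (m : ℝ≥0∞) / k) :
    x ∈ clev k f j ↔ j ≤ m := by
  rw [clev, mem_setOf_eq, hm, cdiv_le_cdiv hk]

lemma clev_anti (hk : k ≠ 0) {f : α → ℝ≥0∞} {i j : ℕ} (h : i ≤ j) :
    clev k f j ⊆ clev k f i :=
  fun _ hx => le_trans ((cdiv_le_cdiv hk).2 h) hx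

lemma clev_mono_fun {f g : α → ℝ≥0∞} (h : ∀ x, f x ≤ g x) (j : ℕ) :
    clev k f j ⊆ clev k g j :=
  fun x hx => le_trans hx (h x)

lemma clev_add_indicator (hk : k ≠ 0) {h : α → ℝ≥0∞}
    (hh : ∀ x, ∃ m : ℕ, h x = (m : ℝ≥0∞) / k) (B : Set α) (n : ℕ) :
    clev k (fun x => h x + B.indicator (fun _ => 1 / (k : ℝ≥0∞)) x) (n + 1)
      = clev k h (n + 1) ∪ (clev k h n ∩ B) := by
  ext x
  obtain ⟨m, hm⟩ := hh x
  rw [Set.mem_union, Set.mem_inter_iff, mem_clev hk hm, mem_clev hk hm]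
  by_cases hxB : x ∈ B
  · have heq : h x + B.indicator (fun _ => 1 / (k : ℝ≥0∞)) x = ((m + 1 : ℕ) : ℝ≥0∞) / k := by
      rw [Set.indicator_of_mem hxB, hm, ENNReal.div_add_div_same]
      push_cast; ring_nf
    have : x ∈ clev k (fun x => h x + B.indicator (fun _ => 1 / (k : ℝ≥0∞)) x) (n + 1)
        ↔ n + 1 ≤ m + 1 := by
      simp only [clev, mem_setOf_eq]
      rw [heq, cdiv_le_cdiv hk]
    rw [this]
    simp [hxB]
    omega
  · have heq : h x + B.indicator (fun _ => 1 / (k : ℝ≥0∞)) x = (m : ℝ≥0∞) / k := by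
      rw [Set.indicator_of_notMem hxB, hm, add_zero]
    have : x ∈ clev k (fun x => h x + B.indicator (fun _ => 1 / (k : ℝ≥0∞)) x) (n + 1)
        ↔ n + 1 ≤ m := by
      simp only [clev, mem_setOf_eq]
      rw [heq, cdiv_le_cdiv hk]
    rw [this]
    simp [hxB]

lemma single_layer {H : Set α → ℝ≥0∞} (hk : k ≠ 0) (hmono : MonotoneSF H)
    (hssa : StronglySubadditive H) {h : α → ℝ≥0∞}
    (hh : ∀ x, ∃ m : ℕ, h x = (m : ℝ≥0∞) / k) (B : Set α) :
    cSsum H k (fun x => h x + B.indicator (fun _ => 1 / (k : ℝ≥0∞)) x) ≤ cSsum H k h + H B := by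
  set a : ℕ → ℝ≥0∞ := fun n => H (clev k h (n + 1)) with ha
  set b : ℕ → ℝ≥0∞ := fun n => H (clev k h n ∩ B) with hb
  set D : ℕ → ℝ≥0∞ := fun n =>
    H (clev k (fun x => h x + B.indicator (fun _ => 1 / (k : ℝ≥0∞)) x) (n + 1)) with hD
  have key : ∀ n, D n + b (n + 1) ≤ a n + b n := by
    intro n
    have h1 : clev k h (n + 1) ∩ (clev k h n ∩ B) = clev k h (n + 1) ∩ B := by
      rw [← Set.inter_assoc, Set.inter_eq_self_of_subset_left (clev_anti hk (Nat.le_succ n))]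
    have h2 := hssa (clev k h (n + 1)) (clev k h n ∩ B)
    rw [h1, ← clev_add_indicator hk hh B n] at h2
    simpa [hD, hb, ha, add_comm] using h2
  have tele : ∀ N, ∑ n ∈ Finset.range N, D n + b N ≤ ∑ n ∈ Finset.range N, a n + b 0 := by
    intro N
    induction N with
    | zero => simp
    | succ N ih =>
      rw [Finset.sum_range_succ, Finset.sum_range_succ]
      calc ∑ n ∈ Finset.range N, D n + D N + b (N + 1)
          ≤ ∑ n ∈ Finset.range N, D n + (a N + b N) := by
            rw [add_assoc]; exact add_le_add_right (key N) _
        _ = (∑ n ∈ Finset.range N, D n + b N) + a N := by ring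
        _ ≤ (∑ n ∈ Finset.range N, a n + b 0) + a N := add_le_add_left ih _
        _ = ∑ n ∈ Finset.range N, a n + a N + b 0 := by ring
  rw [cSsum, ENNReal.tsum_eq_iSup_nat]
  apply iSup_le
  intro N
  calc ∑ n ∈ Finset.range N, D n ≤ ∑ n ∈ Finset.range N, D n + b N := le_self_add
    _ ≤ ∑ n ∈ Finset.range N, a n + b 0 := tele N
    _ ≤ cSsum H k h + H B :=
        add_le_add (ENNReal.sum_le_tsum _) (hmono Set.inter_subset_right)

lemma bounded_add {H : Set α → ℝ≥0∞} (hk : k ≠ 0) (h0 : H ∅ = 0) (hmono : MonotoneSF H)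
    (hssa : StronglySubadditive H) :
    ∀ m : ℕ, ∀ f g : α → ℝ≥0∞, (∀ x, ∃ m' : ℕ, f x = (m' : ℝ≥0∞) / k) →
      (∀ x, ∃ m' : ℕ, m' ≤ m ∧ g x = (m' : ℝ≥0∞) / k) →
      cSsum H k (fun x => f x + g x) ≤ cSsum H k f + cSsum H k g := by
  intro m
  induction m with
  | zero =>
    intro f g hf hg
    have hg0 : ∀ x, g x = 0 := by
      intro x
      obtain ⟨m', hm', he⟩ := hg x
      interval_cases m'
      simpa using he
    have : (fun x => f x + g x) = f := by
      funext x; rw [hg0 x, add_zero]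
    rw [this]
    exact le_self_add
  | succ m ih =>
    intro f g hf hg
    set B : Set α := clev k g (m + 1) with hB
    set g'' : α → ℝ≥0∞ := fun x => min (g x) ((m : ℝ≥0∞) / k) with hg''def
    have hg'' : ∀ x, ∃ m' : ℕ, m' ≤ m ∧ g'' x = (m' : ℝ≥0∞) / k := by
      intro x
      obtain ⟨m', hm', he⟩ := hg x
      by_cases hle : m' ≤ m
      · exact ⟨m', hle, by rw [hg''def]; simp only; rw [he, min_eq_left ((cdiv_le_cdiv hk).2 hle)]⟩
      · have : m' = m + 1 := by omega
        exact ⟨m, le_rfl, by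
          rw [hg''def]; simp only
          rw [he, min_eq_right ((cdiv_le_cdiv hk).2 (by omega))]⟩
    have hdecomp : ∀ x, g x = g'' x + B.indicator (fun _ => 1 / (k : ℝ≥0∞)) x := by
      intro x
      obtain ⟨m', hm', he⟩ := hg x
      by_cases hxB : x ∈ B
      · have hm'' : m + 1 ≤ m' := (mem_clev hk he).1 hxB
        have : m' = m + 1 := by omega
        subst this
        rw [Set.indicator_of_mem hxB, he, hg''def]
        simp only
        rw [he, min_eq_right ((cdiv_le_cdiv hk).2 (by omega)), ENNReal.div_add_div_same]
        push_cast; ring_nf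
      · have hm'' : ¬ (m + 1 ≤ m') := fun h => hxB ((mem_clev hk he).2 h)
        rw [Set.indicator_of_notMem hxB, he, hg''def, add_zero]
        simp only
        rw [he, min_eq_left ((cdiv_le_cdiv hk).2 (by omega))]
    have hSg : cSsum H k g'' + H B ≤ cSsum H k g := by
      have hzero : ∀ j : ℕ, m ≤ j → H (clev k g'' (j + 1)) = 0 := by
        intro j hj
        have : clev k g'' (j + 1) = ∅ := by
          ext x
          obtain ⟨m', hm', he⟩ := hg'' x
          rw [mem_clev hk he]
          simp
          omega
        rw [this, h0]
      have hsum'' : cSsum H k g'' = ∑ j ∈ Finset.range m, H (clev k g'' (j + 1)) := by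
        rw [cSsum]
        refine tsum_eq_sum ?_
        intro j hj
        exact hzero j (by simpa using hj)
      have heqlow : ∀ j ∈ Finset.range m, H (clev k g'' (j + 1)) = H (clev k g (j + 1)) := by
        intro j hj
        have hjm : j + 1 ≤ m := by have := Finset.mem_range.1 hj; omega
        congr 1
        ext x
        obtain ⟨m', hm', he⟩ := hg x
        obtain ⟨m'', hm'', he''⟩ := hg'' x
        rw [mem_clev hk he'', mem_clev hk he]
        have : g'' x = min (g x) ((m : ℝ≥0∞) / k) := rfl
        rw [he, he''] at this
        have hmin : (m'' : ℝ≥0∞) / k = ((min m' m : ℕ) : ℝ≥0∞) / k := by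
          rw [this]
          rcases le_total m' m with h | h
          · rw [min_eq_left ((cdiv_le_cdiv hk).2 h), min_eq_left h]
          · rw [min_eq_right ((cdiv_le_cdiv hk).2 h), min_eq_right h]
        have hm''eq : m'' = min m' m := by
          have h2 : (m'' : ℝ≥0∞) = ((min m' m : ℕ) : ℝ≥0∞) := by
            have h3 := congrArg (fun z => z * (k : ℝ≥0∞)) hmin
            simpa [ENNReal.div_mul_cancel (show (k : ℝ≥0∞) ≠ 0 from by exact_mod_cast hk)
              (by simp : (k : ℝ≥0∞) ≠ ⊤)] using h3
          exact_mod_cast h2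
        omega
      have hBsum : H B = H (clev k g (m + 1)) := rfl
      calc cSsum H k g'' + H B
          = ∑ j ∈ Finset.range m, H (clev k g (j + 1)) + H (clev k g (m + 1)) := by
            rw [hsum'', Finset.sum_congr rfl heqlow, hBsum]
        _ = ∑ j ∈ Finset.range (m + 1), H (clev k g (j + 1)) := by
            rw [Finset.sum_range_succ]
        _ ≤ cSsum H k g := ENNReal.sum_le_tsum _
    have hfg'' : ∀ x, ∃ m' : ℕ, (fun x => f x + g'' x) x = (m' : ℝ≥0∞) / k := by
      intro x
      obtain ⟨a, hae⟩ := hf x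
      obtain ⟨b, _, hbe⟩ := hg'' x
      exact ⟨a + b, by simp only; rw [hae, hbe, ENNReal.div_add_div_same, Nat.cast_add]⟩
    have hrw : (fun x => f x + g x)
        = fun x => (f x + g'' x) + B.indicator (fun _ => 1 / (k : ℝ≥0∞)) x := by
      funext x
      rw [hdecomp x, add_assoc]
    calc cSsum H k (fun x => f x + g x)
        = cSsum H k (fun x => (f x + g'' x) + B.indicator (fun _ => 1 / (k : ℝ≥0∞)) x) := by
          rw [hrw]
      _ ≤ cSsum H k (fun x => f x + g'' x) + H B := single_layer hk hmono hssa hfg'' B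
      _ ≤ (cSsum H k f + cSsum H k g'') + H B :=
          add_le_add_left (ih f g'' hf hg'') _
      _ = cSsum H k f + (cSsum H k g'' + H B) := by ring
      _ ≤ cSsum H k f + cSsum H k g := add_le_add_right hSg _

lemma cSsum_add_le {H : Set α → ℝ≥0∞} (hk : k ≠ 0) (h0 : H ∅ = 0) (hmono : MonotoneSF H)
    (hssa : StronglySubadditive H) {f g : α → ℝ≥0∞}
    (hf : ∀ x, ∃ m : ℕ, f x = (m : ℝ≥0∞) / k) (hg : ∀ x, ∃ m : ℕ, g x = (m : ℝ≥0∞) / k) :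
    cSsum H k (fun x => f x + g x) ≤ cSsum H k f + cSsum H k g := by
  rw [cSsum, ENNReal.tsum_eq_iSup_nat]
  apply iSup_le
  intro N
  set gN : α → ℝ≥0∞ := fun x => min (g x) ((N : ℝ≥0∞) / k) with hgNdef
  have hgN : ∀ x, ∃ m' : ℕ, m' ≤ N ∧ gN x = (m' : ℝ≥0∞) / k := by
    intro x
    obtain ⟨m', he⟩ := hg x
    by_cases hle : m' ≤ N
    · exact ⟨m', hle, by rw [hgNdef]; simp only; rw [he, min_eq_left ((cdiv_le_cdiv hk).2 hle)]⟩
    · exact ⟨N, le_rfl, by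
        rw [hgNdef]; simp only
        rw [he, min_eq_right ((cdiv_le_cdiv hk).2 (by omega))]⟩
  have hsub : ∀ j ∈ Finset.range N,
      clev k (fun x => f x + g x) (j + 1) ⊆ clev k (fun x => f x + gN x) (j + 1) := by
    intro j hj x hx
    have hjN : j + 1 ≤ N := by have := Finset.mem_range.1 hj; omega
    simp only [clev, mem_setOf_eq] at hx ⊢
    show ((j + 1 : ℕ) : ℝ≥0∞) / k ≤ f x + gN x
    rcases le_total (g x) ((N : ℝ≥0∞) / k) with h | h
    · have hx2 : gN x = g x := min_eq_left h
      rw [hx2]; exact hx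
    · have hx2 : gN x = (N : ℝ≥0∞) / k := min_eq_right h
      rw [hx2]
      exact le_trans ((cdiv_le_cdiv hk).2 hjN) le_add_self
  calc ∑ j ∈ Finset.range N, H (clev k (fun x => f x + g x) (j + 1))
      ≤ ∑ j ∈ Finset.range N, H (clev k (fun x => f x + gN x) (j + 1)) :=
        Finset.sum_le_sum fun j hj => hmono (hsub j hj)
    _ ≤ cSsum H k (fun x => f x + gN x) := ENNReal.sum_le_tsum _
    _ ≤ cSsum H k f + cSsum H k gN :=
        bounded_add hk h0 hmono hssa N f gN hf hgN
    _ ≤ cSsum H k f + cSsum H k g := by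
        refine add_le_add_right (ENNReal.tsum_le_tsum fun j => hmono ?_) _
        exact clev_mono_fun (fun x => min_le_left _ _) _

lemma choquet_eq_cSsum {H : Set α → ℝ≥0∞} (hk : 0 < k) {f : α → ℝ≥0∞}
    (hf : ∀ x, ∃ m : ℕ, f x = (m : ℝ≥0∞) / k) :
    choquet H f = cSsum H k f * ENNReal.ofReal ((k : ℝ)⁻¹) := by
  have hk' : k ≠ 0 := hk.ne'
  have hkR : (0 : ℝ) < k := Nat.cast_pos.2 hk
  have hU : (⋃ j : ℕ, Ico ((j : ℝ) / k) (((j : ℝ) + 1) / k)) = Ici 0 := by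
    ext t
    simp only [mem_iUnion, mem_Ico, mem_Ici]
    constructor
    · rintro ⟨j, h1, -⟩
      exact le_trans (by positivity) h1
    · intro ht
      refine ⟨⌊t * k⌋₊, ?_, ?_⟩
      · rw [div_le_iff₀ hkR]
        exact Nat.floor_le (by positivity)
      · rw [lt_div_iff₀ hkR]
        exact Nat.lt_floor_add_one _
  have hdisjkey : ∀ i j : ℕ, i < j →
      Disjoint (Ico ((i : ℝ) / k) (((i : ℝ) + 1) / k)) (Ico ((j : ℝ) / k) (((j : ℝ) + 1) / k)) := by
    intro i j hij
    refine Set.disjoint_left.2 fun t hti htj => ?_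
    have h1 : ((i : ℝ) + 1) / k ≤ (j : ℝ) / k :=
      (div_le_div_iff_of_pos_right hkR).2 (by exact_mod_cast hij)
    exact lt_irrefl t (lt_of_lt_of_le hti.2 (h1.trans htj.1))
  have hdisj : Pairwise (Function.onFun Disjoint
      fun j : ℕ => Ico ((j : ℝ) / k) (((j : ℝ) + 1) / k)) := by
    intro i j hij
    rcases hij.lt_or_gt with h | h
    · exact hdisjkey i j h
    · exact (hdisjkey j i h).symm
  have hpiece : ∀ j : ℕ, ∫⁻ t in Ico ((j : ℝ) / k) (((j : ℝ) + 1) / k),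
      H {x | ENNReal.ofReal t < f x} = H (clev k f (j + 1)) * ENNReal.ofReal ((k : ℝ)⁻¹) := by
    intro j
    have hset : ∀ t ∈ Ico ((j : ℝ) / k) (((j : ℝ) + 1) / k),
        H {x | ENNReal.ofReal t < f x} = H (clev k f (j + 1)) := by
      intro t ht
      have ht0 : (0 : ℝ) ≤ t := le_trans (by positivity) ht.1
      congr 1
      ext x
      obtain ⟨m, hm⟩ := hf x
      rw [mem_setOf_eq, hm, mem_clev hk' hm]
      have hrw : (m : ℝ≥0∞) / k = ENNReal.ofReal ((m : ℝ) / k) := by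
        rw [ENNReal.ofReal_div_of_pos hkR, ENNReal.ofReal_natCast, ENNReal.ofReal_natCast]
      rw [hrw, ENNReal.ofReal_lt_ofReal_iff_of_nonneg ht0]
      constructor
      · intro h
        have h2 : (j : ℝ) / k < (m : ℝ) / k := lt_of_le_of_lt ht.1 h
        have h3 : (j : ℝ) < m := (div_lt_div_iff_of_pos_right hkR).1 h2
        have h4 : j < m := by exact_mod_cast h3
        omega
      · intro h
        have h2 : ((j : ℝ) + 1) / k ≤ (m : ℝ) / k :=
          (div_le_div_iff_of_pos_right hkR).2 (by exact_mod_cast h)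
        exact lt_of_lt_of_le ht.2 h2
    rw [setLIntegral_congr_fun measurableSet_Ico hset,
      setLIntegral_const, Real.volume_Ico]
    congr 1
    congr 1
    field_simp
    ring
  calc choquet H f
      = ∫⁻ t in Ici (0 : ℝ), H {x | ENNReal.ofReal t < f x} :=
        setLIntegral_congr (MeasureTheory.Ioi_ae_eq_Ici)
    _ = ∫⁻ t in ⋃ j : ℕ, Ico ((j : ℝ) / k) (((j : ℝ) + 1) / k),
        H {x | ENNReal.ofReal t < f x} := by rw [hU]
    _ = ∑' j : ℕ, ∫⁻ t in Ico ((j : ℝ) / k) (((j : ℝ) + 1) / k),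
        H {x | ENNReal.ofReal t < f x} :=
        lintegral_iUnion (fun _ => measurableSet_Ico) hdisj _
    _ = ∑' j : ℕ, H (clev k f (j + 1)) * ENNReal.ofReal ((k : ℝ)⁻¹) := by
        exact tsum_congr hpiece
    _ = cSsum H k f * ENNReal.ofReal ((k : ℝ)⁻¹) := ENNReal.tsum_mul_right

end ChoquetAux
/-- Sublinearity of the Choquet integral for functions with values in
`ℕ/k = {m/k : m ∈ ℕ}`. -/
theorem choquet_sublinear_discreteValued {d : ℕ}
    (H : Set (EuclideanSpace ℝ (Fin d)) → ℝ≥0∞)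
    (hmono : MonotoneSF H) (hssa : StronglySubadditive H)
    (k : ℕ) (hk : 0 < k) (f g : EuclideanSpace ℝ (Fin d) → ℝ≥0∞)
    (hf : ∀ x, ∃ m : ℕ, f x = (m : ℝ≥0∞) / (k : ℝ≥0∞))
    (hg : ∀ x, ∃ m : ℕ, g x = (m : ℝ≥0∞) / (k : ℝ≥0∞)) :
    choquet H (fun x => f x + g x) ≤ choquet H f + choquet H g := by
  by_cases h0 : H ∅ = 0
  · have hfg : ∀ x, ∃ m : ℕ, (fun x => f x + g x) x = (m : ℝ≥0∞) / k := by
      intro x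
      obtain ⟨a, ha⟩ := hf x
      obtain ⟨b, hb⟩ := hg x
      exact ⟨a + b, by simp only; rw [ha, hb, ENNReal.div_add_div_same, Nat.cast_add]⟩
    rw [choquet_eq_cSsum hk hfg, choquet_eq_cSsum hk hf, choquet_eq_cSsum hk hg, ← add_mul]
    exact mul_le_mul_left (cSsum_add_le hk.ne' h0 hmono hssa hf hg) _
  · have htop : choquet H f = ⊤ := by
      have hle : ∫⁻ _ in Ioi (0 : ℝ), H ∅ ≤ choquet H f :=
        lintegral_mono fun _ => hmono (Set.empty_subset _)
      rw [setLIntegral_const, Real.volume_Ioi, ENNReal.mul_top h0] at hle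
      exact top_le_iff.1 hle
    rw [htop]
    simp
end

section
/- Suppose H : 𝒫(ℝ^d) → [0,∞] is monotone and strongly subadditive. If (f_n) is a sequence of real-valued functions on ℝ^d such that the partial sums (∑_{n=0}^k f_n)_{k∈ℕ} converge quasi-uniformly to a function F : ℝ^d → ℝ, then ∫|F| dH ≤ ∑_{n=0}^∞ ∫|f_n| dH. -/
open MeasureTheory Filter Set Topology
open scoped ENNReal

/-! ### Auxiliary development for Statement 12 -/

namespace ChoquetAux

variable {α : Type*}

/-- The level set `{f > t}`. -/
def lev (f : α → ℝ≥0∞) (t : ℝ) : Set α := {x | ENNReal.ofReal t < f x}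

lemma lev_antitone (f : α → ℝ≥0∞) : Antitone (lev f) := fun _ _ hst _ hx =>
  lt_of_le_of_lt (ENNReal.ofReal_le_ofReal hst) hx

lemma lev_mono {f g : α → ℝ≥0∞} (h : ∀ x, f x ≤ g x) (t : ℝ) : lev f t ⊆ lev g t :=
  fun x hx => lt_of_lt_of_le hx (h x)

lemma measurable_Hlev {H : Set α → ℝ≥0∞} (hmono : MonotoneSF H) (f : α → ℝ≥0∞) :
    Measurable fun t => H (lev f t) :=
  Antitone.measurable (fun _ _ hst => hmono (lev_antitone f hst))

lemma choquet_eq (H : Set α → ℝ≥0∞) (f : α → ℝ≥0∞) :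
    choquet H f = ∫⁻ t in Set.Ioi (0:ℝ), H (lev f t) := rfl

lemma finSub {H : Set α → ℝ≥0∞} (hssa : StronglySubadditive H) (A B : Set α) :
    H (A ∪ B) ≤ H A + H B :=
  le_trans (le_add_left le_rfl) (hssa A B)

lemma ofReal_split {c t : ℝ} (hc : 0 ≤ c) (hct : c ≤ t) :
    ENNReal.ofReal t = ENNReal.ofReal (t - c) + ENNReal.ofReal c := by
  rw [← ENNReal.ofReal_add (by linarith) hc]; ring_nf

lemma ofReal_one_add_mul_le {C : ℝ≥0∞} (hC : C ≠ ⊤) {e : ℝ} (he : 0 < e) :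
    ENNReal.ofReal (1 + e/(C.toReal+1)) * C ≤ C + ENNReal.ofReal e := by
  have h1 : (0:ℝ) ≤ e/(C.toReal+1) := by positivity
  rw [ENNReal.ofReal_add zero_le_one h1, ENNReal.ofReal_one, add_mul, one_mul]
  refine add_le_add_right ?_ C
  have h2 : (0:ℝ) ≤ C.toReal := ENNReal.toReal_nonneg
  have key : ENNReal.ofReal (e/(C.toReal+1)) * C
      = ENNReal.ofReal (e/(C.toReal+1) * C.toReal) := by
    rw [ENNReal.ofReal_mul h1, ENNReal.ofReal_toReal hC]
  rw [key]
  apply ENNReal.ofReal_le_ofReal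
  rw [div_mul_eq_mul_div, div_le_iff₀ (by positivity)]
  nlinarith

lemma lint_Ioi_iSup (w : ℝ → ℝ≥0∞) (hw : Measurable w) :
    ∫⁻ t in Ioi (0:ℝ), w t = ⨆ n : ℕ, ∫⁻ t in Ioc (0:ℝ) n, w t := by
  have hpt : ∀ t : ℝ, (Ioi (0:ℝ)).indicator w t = ⨆ n : ℕ, (Ioc (0:ℝ) (n:ℝ)).indicator w t := by
    intro t
    by_cases ht : 0 < t
    · rw [indicator_of_mem (mem_Ioi.mpr ht)]
      apply le_antisymm
      · obtain ⟨n, hn⟩ := exists_nat_ge t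
        exact le_iSup_of_le n
          (le_of_eq (indicator_of_mem (show t ∈ Ioc (0:ℝ) (n:ℝ) from ⟨ht, hn⟩) w).symm)
      · exact iSup_le fun n => indicator_le_self _ _ t
    · rw [indicator_of_notMem (fun h => ht (mem_Ioi.mp h))]
      symm
      simp only [ENNReal.iSup_eq_zero]
      intro n
      exact indicator_of_notMem (fun h => ht h.1) w
  rw [← lintegral_indicator measurableSet_Ioi]
  simp_rw [hpt]
  rw [lintegral_iSup (fun n => hw.indicator measurableSet_Ioc)
    (fun n m hnm => indicator_le_indicator_of_subset
      (Ioc_subset_Ioc le_rfl (Nat.cast_le.2 hnm)) (fun a => zero_le))]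
  simp_rw [lintegral_indicator measurableSet_Ioc]

lemma lint_Ioi_iSup_tail (w : ℝ → ℝ≥0∞) (hw : Measurable w) :
    ∫⁻ t in Ioi (0:ℝ), w t = ⨆ n : ℕ, ∫⁻ t in Ioi ((n:ℝ)+1)⁻¹, w t := by
  have hpt : ∀ t : ℝ, (Ioi (0:ℝ)).indicator w t
      = ⨆ n : ℕ, (Ioi (((n:ℝ)+1)⁻¹ : ℝ)).indicator w t := by
    intro t
    by_cases ht : 0 < t
    · rw [indicator_of_mem (mem_Ioi.mpr ht)]
      apply le_antisymm
      · obtain ⟨n, hn⟩ := exists_nat_gt t⁻¹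
        refine le_iSup_of_le n (le_of_eq (indicator_of_mem ?_ w).symm)
        have h1 : t⁻¹ < (n:ℝ)+1 := hn.trans (by linarith)
        have h2 : ((n:ℝ)+1)⁻¹ < t⁻¹⁻¹ := inv_strictAnti₀ (inv_pos.mpr ht) h1
        rw [inv_inv] at h2
        exact mem_Ioi.mpr h2
      · exact iSup_le fun n => indicator_le_self _ _ t
    · rw [indicator_of_notMem (fun h => ht (mem_Ioi.mp h))]
      symm
      simp only [ENNReal.iSup_eq_zero]
      intro n
      refine indicator_of_notMem (fun h => ht ?_) w
      have : (0:ℝ) < ((n:ℝ)+1)⁻¹ := by positivity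
      exact this.trans h
  rw [← lintegral_indicator measurableSet_Ioi]
  simp_rw [hpt]
  rw [lintegral_iSup (fun n => hw.indicator measurableSet_Ioi)]
  · simp_rw [lintegral_indicator measurableSet_Ioi]
  · intro n m hnm
    refine indicator_le_indicator_of_subset (Ioi_subset_Ioi ?_) (fun a => zero_le)
    apply inv_anti₀ (by positivity)
    have : (n:ℝ) ≤ m := Nat.cast_le.2 hnm
    linarith

lemma small_near_zero (w : ℝ → ℝ≥0∞) (hw : Measurable w)
    (hfin : ∫⁻ t in Ioi (0:ℝ), w t ≠ ⊤) {ε : ℝ} (hε : 0 < ε) :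
    ∃ η : ℝ, 0 < η ∧ ∫⁻ t in Ioc (0:ℝ) η, w t ≤ ENNReal.ofReal ε := by
  set I := ∫⁻ t in Ioi (0:ℝ), w t with hI
  by_cases h0 : I ≤ ENNReal.ofReal ε
  · exact ⟨1, one_pos, le_trans (lintegral_mono_set Ioc_subset_Ioi_self) h0⟩
  push_neg at h0
  have hIne : I ≠ 0 := fun h => by simp [h] at h0
  have hsub : I - ENNReal.ofReal ε < I := ENNReal.sub_lt_self hfin hIne
    (by simp [ENNReal.ofReal_eq_zero]; linarith)
  have hsub2 : I - ENNReal.ofReal ε < ⨆ n : ℕ, ∫⁻ t in Ioi (((n:ℝ)+1)⁻¹:ℝ), w t := by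
    rw [← lint_Ioi_iSup_tail w hw, ← hI]; exact hsub
  rw [lt_iSup_iff] at hsub2
  obtain ⟨n, hn⟩ := hsub2
  refine ⟨((n:ℝ)+1)⁻¹, by positivity, ?_⟩
  have hIs : I ≤ (∫⁻ t in Ioi (((n:ℝ)+1)⁻¹:ℝ), w t) + ENNReal.ofReal ε :=
    tsub_le_iff_right.mp hn.le
  have hunion : (∫⁻ t in Ioc (0:ℝ) (((n:ℝ)+1)⁻¹:ℝ), w t)
      + ∫⁻ t in Ioi (((n:ℝ)+1)⁻¹:ℝ), w t = I := by
    rw [hI, ← lintegral_union measurableSet_Ioi (Ioc_disjoint_Ioi le_rfl)]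
    congr 1
    rw [Set.Ioc_union_Ioi_eq_Ioi (by positivity)]
  have htail_fin : (∫⁻ t in Ioi (((n:ℝ)+1)⁻¹:ℝ), w t) ≠ ⊤ := by
    intro h
    rw [h] at hunion
    simp at hunion
    exact hfin (by simpa [eq_comm] using hunion)
  have := hunion.le.trans hIs
  rwa [add_comm, ENNReal.add_le_add_iff_left htail_fin] at this

lemma lint_scale (w : ℝ → ℝ≥0∞) (hw : Measurable w) {l b : ℝ} (hl : 0 < l) :
    ∫⁻ t in Ioc (0:ℝ) b, w (l * t) = ENNReal.ofReal l⁻¹ * ∫⁻ s in Ioc (0:ℝ) (l*b), w s := by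
  have hpre : (fun x : ℝ => l * x) ⁻¹' Ioc (0:ℝ) (l*b) = Ioc 0 b := by
    ext x
    simp only [mem_preimage, mem_Ioc]
    constructor
    · rintro ⟨h1, h2⟩
      refine ⟨?_, le_of_mul_le_mul_left h2 hl⟩
      nlinarith
    · rintro ⟨h1, h2⟩
      exact ⟨mul_pos hl h1, mul_le_mul_of_nonneg_left h2 hl.le⟩
  have hmap : Measure.map (fun x : ℝ => l * x) (volume.restrict (Ioc 0 b))
      = (ENNReal.ofReal |l⁻¹| • volume).restrict (Ioc (0:ℝ) (l*b)) := by
    rw [← Real.map_volume_mul_left (ne_of_gt hl),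
      Measure.restrict_map (measurable_const_mul l) measurableSet_Ioc, hpre]
  calc ∫⁻ t in Ioc (0:ℝ) b, w (l * t)
      = ∫⁻ s, w s ∂(Measure.map (fun x : ℝ => l * x) (volume.restrict (Ioc 0 b))) :=
        (lintegral_map hw (measurable_const_mul l)).symm
    _ = ∫⁻ s, w s ∂((ENNReal.ofReal |l⁻¹| • volume).restrict (Ioc (0:ℝ) (l*b))) := by rw [hmap]
    _ = ENNReal.ofReal l⁻¹ * ∫⁻ s in Ioc (0:ℝ) (l*b), w s := by
        rw [Measure.restrict_smul, lintegral_smul_measure, abs_of_pos (inv_pos.2 hl), smul_eq_mul]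

lemma lint_shift (w : ℝ → ℝ≥0∞) (hw : Measurable w) (a b c : ℝ) :
    ∫⁻ t in Ioc a b, w (t - c) = ∫⁻ s in Ioc (a-c) (b-c), w s := by
  have hpre : (fun x : ℝ => x - c) ⁻¹' Ioc (a-c) (b-c) = Ioc a b := by
    ext x
    simp only [mem_preimage, mem_Ioc]
    constructor <;> rintro ⟨h1, h2⟩ <;> constructor <;> linarith
  have hmeas : Measurable (fun x : ℝ => x - c) := measurable_sub_const c
  have hvol : Measure.map (fun x : ℝ => x - c) volume = volume := by
    simpa [sub_eq_add_neg] using (measurePreserving_add_right volume (-c)).map_eq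
  have hmap : Measure.map (fun x : ℝ => x - c) (volume.restrict (Ioc a b))
      = volume.restrict (Ioc (a-c) (b-c)) := by
    conv_rhs => rw [← hvol]
    rw [Measure.restrict_map hmeas measurableSet_Ioc, hpre]
  rw [← hmap, lintegral_map hw hmeas]

/-- KEY LEMMA: the Choquet integral of `f + c·1_B` for a monotone strongly
subadditive set function. -/
lemma choquet_add_indicator {H : Set α → ℝ≥0∞} (hmono : MonotoneSF H)
    (hssa : StronglySubadditive H) (f : α → ℝ≥0∞) (B : Set α) {c : ℝ} (hc : 0 < c) :
    choquet H (fun x => f x + B.indicator (fun _ => ENNReal.ofReal c) x)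
      ≤ choquet H f + ENNReal.ofReal c * H B := by
  set g : α → ℝ≥0∞ := fun x => f x + B.indicator (fun _ => ENNReal.ofReal c) x with hg
  by_cases hJf : choquet H f = ⊤
  · rw [hJf]; simp
  have hfg' : ∀ x, f x ≤ g x := fun x => le_self_add
  have hlev_sub : ∀ t, lev f t ⊆ lev g t := fun t => lev_mono hfg' t
  have hunion : ∀ t : ℝ, lev f t ∪ (B ∩ lev g t) = lev g t := by
    intro t
    apply Subset.antisymm
    · exact union_subset (hlev_sub t) inter_subset_right
    · intro x hx
      by_cases hB : x ∈ B
      · exact Or.inr ⟨hB, hx⟩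
      · left
        have : g x = f x := by simp [hg, indicator_of_notMem hB]
        rwa [lev, mem_setOf_eq, this] at hx
  have hinter : ∀ t : ℝ, lev f t ∩ (B ∩ lev g t) = B ∩ lev f t := by
    intro t
    ext x
    constructor
    · rintro ⟨h1, h2, _⟩; exact ⟨h2, h1⟩
    · rintro ⟨h1, h2⟩; exact ⟨h2, h1, hlev_sub t h2⟩
  have hsubmod : ∀ t : ℝ, H (lev g t) + H (B ∩ lev f t)
      ≤ H (lev f t) + H (B ∩ lev g t) := by
    intro t
    have := hssa (lev f t) (B ∩ lev g t)
    rw [hinter t, hunion t] at this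
    rwa [add_comm] at this
  have hshift_set : ∀ t : ℝ, c ≤ t → B ∩ lev g t = B ∩ lev f (t - c) := by
    intro t hct
    ext x
    simp only [mem_inter_iff, lev, mem_setOf_eq, and_congr_right_iff]
    intro hB
    have hgx : g x = f x + ENNReal.ofReal c := by simp [hg, indicator_of_mem hB]
    rw [hgx, ofReal_split hc.le hct,
      ENNReal.add_lt_add_iff_right ENNReal.ofReal_ne_top]
  have mg : Measurable fun t => H (lev g t) := measurable_Hlev hmono g
  have mf : Measurable fun t => H (lev f t) := measurable_Hlev hmono f
  have mBf : Measurable fun t => H (B ∩ lev f t) :=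
    Antitone.measurable (fun _ _ hst => hmono (inter_subset_inter_right B (lev_antitone f hst)))
  have mBg : Measurable fun t => H (B ∩ lev g t) :=
    Antitone.measurable (fun _ _ hst => hmono (inter_subset_inter_right B (lev_antitone g hst)))
  have hmain : ∀ T : ℝ, c ≤ T →
      ∫⁻ t in Ioc (0:ℝ) T, H (lev g t) ≤ choquet H f + ENNReal.ofReal c * H B := by
    intro T hcT
    set I2 := ∫⁻ t in Ioc (0:ℝ) T, H (B ∩ lev f t) with hI2
    set I3 := ∫⁻ t in Ioc (0:ℝ) T, H (lev f t) with hI3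
    have hI2fin : I2 ≠ ⊤ := by
      have : I2 ≤ choquet H f := by
        rw [choquet_eq]
        exact le_trans (setLIntegral_mono mf (fun t _ => hmono inter_subset_right))
          (lintegral_mono_set Ioc_subset_Ioi_self)
      exact fun h => hJf (top_le_iff.mp (h ▸ this))
    have hI3le : I3 ≤ choquet H f := by
      rw [choquet_eq]; exact lintegral_mono_set Ioc_subset_Ioi_self
    have step1 : (∫⁻ t in Ioc (0:ℝ) T, H (lev g t)) + I2
        ≤ I3 + ∫⁻ t in Ioc (0:ℝ) T, H (B ∩ lev g t) := by
      rw [hI2, hI3, ← lintegral_add_left mg, ← lintegral_add_left mf]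
      exact setLIntegral_mono (mf.add mBg) (fun t _ => hsubmod t)
    have step2 : (∫⁻ t in Ioc (0:ℝ) T, H (B ∩ lev g t))
        ≤ ENNReal.ofReal c * H B + I2 := by
      have hsplit : Ioc (0:ℝ) T = Ioc 0 c ∪ Ioc c T := (Ioc_union_Ioc_eq_Ioc hc.le hcT).symm
      rw [hsplit, lintegral_union measurableSet_Ioc (Ioc_disjoint_Ioc_of_le le_rfl)]
      have h1 : (∫⁻ t in Ioc (0:ℝ) c, H (B ∩ lev g t)) ≤ ENNReal.ofReal c * H B := by
        calc ∫⁻ t in Ioc (0:ℝ) c, H (B ∩ lev g t)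
            ≤ ∫⁻ _ in Ioc (0:ℝ) c, H B :=
              setLIntegral_mono measurable_const (fun t _ => hmono inter_subset_left)
          _ = H B * volume (Ioc (0:ℝ) c) := setLIntegral_const _ _
          _ = ENNReal.ofReal c * H B := by rw [Real.volume_Ioc, mul_comm]; norm_num
      have h2 : (∫⁻ t in Ioc c T, H (B ∩ lev g t)) ≤ I2 := by
        have heq : (∫⁻ t in Ioc c T, H (B ∩ lev g t))
            = ∫⁻ t in Ioc c T, H (B ∩ lev f (t - c)) := by
          apply setLIntegral_congr_fun measurableSet_Ioc
          intro t ht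
          simp only [hshift_set t ht.1.le]
        rw [heq]
        have := lint_shift (fun s => H (B ∩ lev f s)) mBf c T c
        rw [this]
        simp only [sub_self]
        exact lintegral_mono_set (Ioc_subset_Ioc le_rfl (by linarith))
      exact add_le_add h1 h2
    have hcomb : (∫⁻ t in Ioc (0:ℝ) T, H (lev g t)) + I2
        ≤ (I3 + ENNReal.ofReal c * H B) + I2 := by
      calc (∫⁻ t in Ioc (0:ℝ) T, H (lev g t)) + I2
          ≤ I3 + ∫⁻ t in Ioc (0:ℝ) T, H (B ∩ lev g t) := step1
        _ ≤ I3 + (ENNReal.ofReal c * H B + I2) := add_le_add_right step2 _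
        _ = (I3 + ENNReal.ofReal c * H B) + I2 := by ring
    have hfin := (ENNReal.add_le_add_iff_right hI2fin).mp hcomb
    exact hfin.trans (add_le_add_left hI3le _)
  rw [choquet_eq, lint_Ioi_iSup _ mg]
  refine iSup_le fun n => ?_
  calc ∫⁻ t in Ioc (0:ℝ) (n:ℝ), H (lev g t)
      ≤ ∫⁻ t in Ioc (0:ℝ) (max (n:ℝ) c), H (lev g t) :=
        lintegral_mono_set (Ioc_subset_Ioc le_rfl (le_max_left _ _))
    _ ≤ choquet H f + ENNReal.ofReal c * H B := hmain _ (le_max_right _ _)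

/-- iterated key lemma -/
lemma choquet_add_simple {H : Set α → ℝ≥0∞} (hmono : MonotoneSF H)
    (hssa : StronglySubadditive H)
    (f : α → ℝ≥0∞) (Bs : ℕ → Set α) {c : ℝ} (hc : 0 < c) (N : ℕ) :
    choquet H (fun x => f x + ∑ i ∈ Finset.range N,
        (Bs i).indicator (fun _ => ENNReal.ofReal c) x)
      ≤ choquet H f + ∑ i ∈ Finset.range N, ENNReal.ofReal c * H (Bs i) := by
  induction N with
  | zero => simp [choquet]
  | succ N ih =>
      have heq : (fun x => f x + ∑ i ∈ Finset.range (N+1),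
          (Bs i).indicator (fun _ => ENNReal.ofReal c) x)
          = fun x => (f x + ∑ i ∈ Finset.range N,
              (Bs i).indicator (fun _ => ENNReal.ofReal c) x)
            + (Bs N).indicator (fun _ => ENNReal.ofReal c) x := by
        funext x; rw [Finset.sum_range_succ, add_assoc]
      rw [heq, Finset.sum_range_succ, ← add_assoc]
      exact le_trans (choquet_add_indicator hmono hssa _ (Bs N) hc) (add_le_add_left ih _)

/-- Riemann lower-sum bound -/
lemma riemann_le {H : Set α → ℝ≥0∞} (hmono : MonotoneSF H) (v : α → ℝ≥0∞)
    {c : ℝ} (hc : 0 < c) (N : ℕ) :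
    ∑ i ∈ Finset.range N, ENNReal.ofReal c * H (lev v (c*(i+1))) ≤ choquet H v := by
  have main : ∀ N : ℕ, ∑ i ∈ Finset.range N, ENNReal.ofReal c * H (lev v (c*(i+1)))
      ≤ ∫⁻ t in Ioc (0:ℝ) (c*N), H (lev v t) := by
    intro N
    induction N with
    | zero => simp
    | succ N ih =>
        rw [Finset.sum_range_succ]
        have hsplit : Ioc (0:ℝ) (c*((N:ℝ)+1)) = Ioc 0 (c*N) ∪ Ioc (c*N) (c*((N:ℝ)+1)) := by
          rw [Ioc_union_Ioc_eq_Ioc (by positivity) (by nlinarith)]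
        have hc1 : (((N+1:ℕ)):ℝ) = (N:ℝ)+1 := by push_cast; ring
        rw [hc1, hsplit, lintegral_union measurableSet_Ioc (Ioc_disjoint_Ioc_of_le le_rfl)]
        refine add_le_add ih ?_
        have hle : ENNReal.ofReal c * H (lev v (c*((N:ℝ)+1)))
            ≤ ∫⁻ t in Ioc (c*(N:ℝ)) (c*((N:ℝ)+1)), H (lev v t) := by
          calc ENNReal.ofReal c * H (lev v (c*((N:ℝ)+1)))
              = H (lev v (c*((N:ℝ)+1))) * volume (Ioc (c*(N:ℝ)) (c*((N:ℝ)+1))) := by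
                rw [Real.volume_Ioc, mul_comm]
                congr 1
                congr 1
                ring
            _ = ∫⁻ _ in Ioc (c*(N:ℝ)) (c*((N:ℝ)+1)), H (lev v (c*((N:ℝ)+1))) :=
                (setLIntegral_const _ _).symm
            _ ≤ ∫⁻ t in Ioc (c*(N:ℝ)) (c*((N:ℝ)+1)), H (lev v t) :=
                setLIntegral_mono (measurable_Hlev hmono v)
                  (fun t ht => hmono (lev_antitone v ht.2))
        convert hle using 3 <;> push_cast <;> ring
  calc ∑ i ∈ Finset.range N, ENNReal.ofReal c * H (lev v (c*(i+1)))
      ≤ ∫⁻ t in Ioc (0:ℝ) (c*N), H (lev v t) := main N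
    _ ≤ choquet H v := by rw [choquet_eq]; exact lintegral_mono_set Ioc_subset_Ioi_self

/-- simple function approximates from above up to `c` -/
lemma approx_pt (v : α → ℝ≥0∞) {c : ℝ} (hc : 0 < c) (N : ℕ) (x : α) :
    min (v x) (ENNReal.ofReal (c*N))
      ≤ (∑ i ∈ Finset.range N, (lev v (c*(i+1))).indicator (fun _ => ENNReal.ofReal c) x)
        + ENNReal.ofReal c := by
  have allfire : ∀ M : ℕ, ENNReal.ofReal (c*M) < v x →
      (∑ i ∈ Finset.range M, (lev v (c*(i+1))).indicator (fun _ => ENNReal.ofReal c) x)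
        = ENNReal.ofReal (c*M) := by
    intro M hM
    have : ∀ i ∈ Finset.range M,
        (lev v (c*(i+1))).indicator (fun _ => ENNReal.ofReal c) x = ENNReal.ofReal c := by
      intro i hi
      have hiM : (i:ℝ)+1 ≤ (M:ℝ) := by
        have := Finset.mem_range.mp hi
        push_cast
        exact_mod_cast Nat.succ_le_of_lt this
      refine indicator_of_mem ?_ _
      have : ENNReal.ofReal (c*((i:ℝ)+1)) ≤ ENNReal.ofReal (c*M) :=
        ENNReal.ofReal_le_ofReal (by nlinarith)
      exact lt_of_le_of_lt this hM
    rw [Finset.sum_congr rfl this, Finset.sum_const, Finset.card_range, nsmul_eq_mul,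
      ENNReal.ofReal_mul hc.le, ← ENNReal.ofReal_natCast M, mul_comm]
  induction N with
  | zero => simp
  | succ N ih =>
      rcases lt_or_ge (ENNReal.ofReal (c*((N:ℕ)+1:ℕ))) (v x) with h | h
      · rw [allfire (N+1) h]
        exact le_add_right (min_le_right _ _)
      · have hminv : min (v x) (ENNReal.ofReal (c*((N+1:ℕ)))) = v x := min_eq_left h
        rw [hminv]
        rcases le_or_gt (v x) (ENNReal.ofReal (c*N)) with h2 | h2
        · have hvx : v x ≤ (∑ i ∈ Finset.range N,
              (lev v (c*(i+1))).indicator (fun _ => ENNReal.ofReal c) x) + ENNReal.ofReal c := by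
            have := ih
            rwa [min_eq_left h2] at this
          refine hvx.trans (add_le_add_left ?_ _)
          rw [Finset.sum_range_succ]
          exact le_self_add
        · rw [Finset.sum_range_succ]
          have hfire := allfire N h2
          calc v x ≤ ENNReal.ofReal (c*((N:ℕ)+1:ℕ)) := h
            _ = ENNReal.ofReal (c*N) + ENNReal.ofReal c := by
                rw [← ENNReal.ofReal_add (by positivity) hc.le]
                congr 1
                push_cast
                ring
            _ ≤ (∑ i ∈ Finset.range N,
                  (lev v (c*(i+1))).indicator (fun _ => ENNReal.ofReal c) x
                + (lev v (c*((N:ℝ)+1))).indicator (fun _ => ENNReal.ofReal c) x)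
                + ENNReal.ofReal c := by
                rw [hfire]
                exact add_le_add_left le_self_add _

/-- Binary subadditivity of the Choquet integral. -/
lemma choquet_add_le {H : Set α → ℝ≥0∞} (hmono : MonotoneSF H)
    (hssa : StronglySubadditive H) (u v : α → ℝ≥0∞) :
    choquet H (fun x => u x + v x) ≤ choquet H u + choquet H v := by
  by_cases hJu : choquet H u = ⊤
  · rw [hJu]; simp
  by_cases hJv : choquet H v = ⊤
  · rw [hJv]; simp
  have mu := measurable_Hlev hmono u
  have mv := measurable_Hlev hmono v
  set uv : α → ℝ≥0∞ := fun x => u x + v x with huv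
  have muv := measurable_Hlev hmono uv
  set C := choquet H u + choquet H v with hC
  have hCne : C ≠ ⊤ := ENNReal.add_ne_top.mpr ⟨hJu, hJv⟩
  rw [choquet_eq, lint_Ioi_iSup _ muv]
  refine iSup_le fun n => ?_
  refine ENNReal.le_of_forall_pos_le_add fun ε hε _ => ?_
  have hεr : (0:ℝ) < (ε:ℝ) := by exact_mod_cast hε
  set w : ℝ → ℝ≥0∞ := fun t => H (lev u t) + H (lev v t) with hw
  have mw : Measurable w := mu.add mv
  have hwfin : ∫⁻ t in Ioi (0:ℝ), w t ≠ ⊤ := by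
    simp only [hw]
    rw [lintegral_add_left mu]
    exact ENNReal.add_ne_top.mpr ⟨hJu, hJv⟩
  obtain ⟨η', hη', hsmall⟩ := small_near_zero w mw hwfin (show (0:ℝ) < (ε:ℝ)/4 by positivity)
  set η : ℝ := 2*η' with hη_def
  have hη : 0 < η := by positivity
  -- near-zero part
  have hnz : ∫⁻ t in Ioc (0:ℝ) η, H (lev uv t) ≤ ENNReal.ofReal ((ε:ℝ)/2) := by
    have hpt : ∀ t ∈ Ioc (0:ℝ) η, H (lev uv t) ≤ w ((1/2)*t) := by
      intro t ht
      have hsub : lev uv t ⊆ lev u ((1/2)*t) ∪ lev v ((1/2)*t) := by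
        intro x hx
        rw [mem_union]
        by_contra hcon
        push_neg at hcon
        obtain ⟨h1, h2⟩ := hcon
        rw [lev, mem_setOf_eq, not_lt] at h1 h2
        have hsum : uv x ≤ ENNReal.ofReal ((1/2)*t) + ENNReal.ofReal ((1/2)*t) :=
          add_le_add h1 h2
        rw [← ENNReal.ofReal_add (by linarith [ht.1]) (by linarith [ht.1])] at hsum
        have ht2 : (1/2)*t + (1/2)*t = t := by ring
        rw [ht2] at hsum
        exact absurd hx (not_lt.mpr hsum)
      calc H (lev uv t) ≤ H (lev u ((1/2)*t) ∪ lev v ((1/2)*t)) := hmono hsub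
        _ ≤ H (lev u ((1/2)*t)) + H (lev v ((1/2)*t)) := finSub hssa _ _
        _ = w ((1/2)*t) := rfl
    have h12 : (1/2:ℝ)*η = η' := by rw [hη_def]; ring
    calc ∫⁻ t in Ioc (0:ℝ) η, H (lev uv t)
        ≤ ∫⁻ t in Ioc (0:ℝ) η, w ((1/2)*t) :=
          setLIntegral_mono (mw.comp (measurable_const_mul (1/2))) hpt
      _ = ENNReal.ofReal ((1/2):ℝ)⁻¹ * ∫⁻ s in Ioc (0:ℝ) ((1/2)*η), w s :=
          lint_scale w mw (by norm_num)
      _ = ENNReal.ofReal 2 * ∫⁻ s in Ioc (0:ℝ) η', w s := by rw [h12]; norm_num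
      _ ≤ ENNReal.ofReal 2 * ENNReal.ofReal ((ε:ℝ)/4) := mul_le_mul_right hsmall _
      _ = ENNReal.ofReal ((ε:ℝ)/2) := by
          rw [← ENNReal.ofReal_mul (by norm_num)]
          congr 1
          ring
  -- middle part
  set ρ : ℝ := ((ε:ℝ)/2)/(C.toReal+1) with hρ_def
  have hρ : 0 < ρ := by positivity
  set lam : ℝ := (1+ρ)⁻¹ with hlam_def
  have h1ρ : (0:ℝ) < 1+ρ := by linarith
  have hlam : 0 < lam := by positivity
  set δ : ℝ := η * ρ / (1+ρ) with hδ_def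
  have hδ : 0 < δ := by positivity
  have hδη : δ < η := by
    rw [hδ_def, div_lt_iff₀ h1ρ]
    nlinarith
  set N : ℕ := ⌈((n:ℝ)+1)/δ⌉₊ with hN_def
  have hδN : (n:ℝ)+1 ≤ δ * N := by
    have h := Nat.le_ceil (((n:ℝ)+1)/δ)
    have h2 := (div_le_iff₀ hδ).mp h
    calc (n:ℝ)+1 ≤ (N:ℝ)*δ := h2
      _ = δ*N := mul_comm _ _
  set gs : α → ℝ≥0∞ := fun x => ∑ i ∈ Finset.range N,
      (lev v (δ*(i+1))).indicator (fun _ => ENNReal.ofReal δ) x with hgs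
  have hincl2 : ∀ t ∈ Ioc η (n:ℝ), lev uv t ⊆ lev (fun x => u x + gs x) (lam*t) := by
    intro t ht x hx
    simp only [lev, mem_setOf_eq] at hx ⊢
    have h1 : ENNReal.ofReal t < u x + min (v x) (ENNReal.ofReal (δ*N)) := by
      rcases le_or_gt (v x) (ENNReal.ofReal (δ*N)) with h|h
      · rwa [min_eq_left h]
      · rw [min_eq_right h.le]
        have ht1 : ENNReal.ofReal t ≤ ENNReal.ofReal (n:ℝ) := ENNReal.ofReal_le_ofReal ht.2
        have ht2 : ENNReal.ofReal (n:ℝ) < ENNReal.ofReal (δ*N) := by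
          rw [ENNReal.ofReal_lt_ofReal_iff (by nlinarith)]
          linarith
        exact lt_of_le_of_lt ht1 (lt_of_lt_of_le ht2 le_add_self)
    have h2 : ENNReal.ofReal t < (u x + gs x) + ENNReal.ofReal δ := by
      refine h1.trans_le ?_
      rw [add_assoc]
      exact add_le_add_right (approx_pt v hδ N x) _
    have hδt : δ ≤ t := (hδη.trans ht.1).le
    have h3 : ENNReal.ofReal (t - δ) < u x + gs x := by
      rw [ofReal_split hδ.le hδt] at h2
      exact (ENNReal.add_lt_add_iff_right ENNReal.ofReal_ne_top).mp h2
    refine lt_of_le_of_lt (ENNReal.ofReal_le_ofReal ?_) h3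
    have hkey : δ * (1+ρ) = η * ρ := by rw [hδ_def]; field_simp
    have hlm : lam * (1+ρ) = 1 := inv_mul_cancel₀ (ne_of_gt h1ρ)
    nlinarith [ht.1, mul_pos hρ (sub_pos.mpr ht.1)]
  have hmid : ∫⁻ t in Ioc η (n:ℝ), H (lev uv t) ≤ ENNReal.ofReal (1+ρ) * C := by
    calc ∫⁻ t in Ioc η (n:ℝ), H (lev uv t)
        ≤ ∫⁻ t in Ioc η (n:ℝ), H (lev (fun x => u x + gs x) (lam*t)) :=
          setLIntegral_mono ((measurable_Hlev hmono _).comp (measurable_const_mul lam))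
            (fun t ht => hmono (hincl2 t ht))
      _ ≤ ∫⁻ t in Ioc (0:ℝ) (n:ℝ), H (lev (fun x => u x + gs x) (lam*t)) :=
          lintegral_mono_set (Ioc_subset_Ioc hη.le le_rfl)
      _ = ENNReal.ofReal lam⁻¹
            * ∫⁻ s in Ioc (0:ℝ) (lam*(n:ℝ)), H (lev (fun x => u x + gs x) s) :=
          lint_scale _ (measurable_Hlev hmono _) hlam
      _ ≤ ENNReal.ofReal lam⁻¹ * choquet H (fun x => u x + gs x) := by
          rw [choquet_eq]
          exact mul_le_mul_right (lintegral_mono_set Ioc_subset_Ioi_self) _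
      _ ≤ ENNReal.ofReal (1+ρ) * C := by
          rw [hlam_def, inv_inv]
          refine mul_le_mul_right ?_ _
          calc choquet H (fun x => u x + gs x)
              ≤ choquet H u + ∑ i ∈ Finset.range N, ENNReal.ofReal δ * H (lev v (δ*(i+1))) :=
                choquet_add_simple hmono hssa u (fun i => lev v (δ*((i:ℝ)+1))) hδ N
            _ ≤ choquet H u + choquet H v :=
                add_le_add_right (riemann_le hmono v hδ N) _
  have hsplit : Ioc (0:ℝ) (n:ℝ) ⊆ Ioc 0 η ∪ Ioc η (n:ℝ) := by
    intro t ht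
    rcases le_or_gt t η with h|h
    · exact Or.inl ⟨ht.1, h⟩
    · exact Or.inr ⟨h, ht.2⟩
  calc ∫⁻ t in Ioc (0:ℝ) (n:ℝ), H (lev uv t)
      ≤ ∫⁻ t in Ioc (0:ℝ) η ∪ Ioc η (n:ℝ), H (lev uv t) := lintegral_mono_set hsplit
    _ ≤ (∫⁻ t in Ioc (0:ℝ) η, H (lev uv t)) + ∫⁻ t in Ioc η (n:ℝ), H (lev uv t) :=
        lintegral_union_le _ _ _
    _ ≤ ENNReal.ofReal ((ε:ℝ)/2) + ENNReal.ofReal (1+ρ) * C := add_le_add hnz hmid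
    _ ≤ ENNReal.ofReal ((ε:ℝ)/2) + (C + ENNReal.ofReal ((ε:ℝ)/2)) := by
        refine add_le_add_right ?_ _
        have hres := ofReal_one_add_mul_le hCne (show (0:ℝ) < (ε:ℝ)/2 by positivity)
        rwa [← hρ_def] at hres
    _ = C + ↑ε := by
        rw [add_comm, add_assoc, ← ENNReal.ofReal_add (by positivity) (by positivity)]
        norm_num [ENNReal.ofReal_coe_nnreal]

/-- Finite subadditivity for partial sums. -/
lemma choquet_partial_le {H : Set α → ℝ≥0∞} (hmono : MonotoneSF H)
    (hssa : StronglySubadditive H) (g : ℕ → α → ℝ≥0∞) (k : ℕ) :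
    choquet H (fun x => ∑ n ∈ Finset.range (k+1), g n x)
      ≤ ∑ n ∈ Finset.range (k+1), choquet H (g n) := by
  induction k with
  | zero => simp
  | succ k ih =>
      have heq : (fun x => ∑ n ∈ Finset.range (k+2), g n x)
          = fun x => (∑ n ∈ Finset.range (k+1), g n x) + g (k+1) x := by
        funext x; rw [Finset.sum_range_succ]
      rw [heq, Finset.sum_range_succ]
      exact le_trans (choquet_add_le hmono hssa _ _) (add_le_add_left ih _)

end ChoquetAux

/-- Countable sublinearity of the Choquet integral for series whose
partial sums converge quasi-uniformly. -/
theorem choquet_countably_sublinear_of_quasiUniform {d : ℕ}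
    (H : Set (EuclideanSpace ℝ (Fin d)) → ℝ≥0∞)
    (hmono : MonotoneSF H) (hssa : StronglySubadditive H)
    (f : ℕ → EuclideanSpace ℝ (Fin d) → ℝ) (F : EuclideanSpace ℝ (Fin d) → ℝ)
    (hqu : QUTendsto H (fun k x => ∑ n ∈ Finset.range (k + 1), f n x) F) :
    choquet H (fun x => ENNReal.ofReal |F x|) ≤
      ∑' n, choquet H (fun x => ENNReal.ofReal |f n x|) := by
  classical
  open ChoquetAux in
  set g : ℕ → EuclideanSpace ℝ (Fin d) → ℝ≥0∞ := fun n x => ENNReal.ofReal |f n x| with hg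
  set S := ∑' n, choquet H (g n) with hS_def
  by_cases hS : S = ⊤
  · rw [hS]; exact le_top
  set P : ℕ → EuclideanSpace ℝ (Fin d) → ℝ≥0∞ :=
    fun k x => ∑ n ∈ Finset.range (k+1), g n x with hP
  have hPmeas : ∀ k, Measurable fun t => H (ChoquetAux.lev (P k) t) :=
    fun k => ChoquetAux.measurable_Hlev hmono _
  set M : ℝ → ℝ≥0∞ := fun s => ⨆ k, H (ChoquetAux.lev (P k) s) with hM
  have hMmeas : Measurable M := Measurable.iSup hPmeas
  have hMint : ∫⁻ s in Ioi (0:ℝ), M s ≤ S := by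
    simp only [hM]
    rw [lintegral_iSup hPmeas]
    · refine iSup_le fun k => ?_
      calc ∫⁻ t in Ioi (0:ℝ), H (ChoquetAux.lev (P k) t) = choquet H (P k) := rfl
        _ ≤ ∑ n ∈ Finset.range (k+1), choquet H (g n) :=
            ChoquetAux.choquet_partial_le hmono hssa g k
        _ ≤ S := hS_def ▸ ENNReal.sum_le_tsum _
    · intro k m hkm t
      refine hmono (ChoquetAux.lev_mono (fun x => ?_) t)
      exact Finset.sum_le_sum_of_subset (Finset.range_subset_range.mpr (by omega))
  set G : EuclideanSpace ℝ (Fin d) → ℝ≥0∞ := fun x => ENNReal.ofReal |F x| with hG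
  have mG := ChoquetAux.measurable_Hlev hmono G
  rw [ChoquetAux.choquet_eq, ChoquetAux.lint_Ioi_iSup _ mG]
  refine iSup_le fun n => ?_
  rcases Nat.eq_zero_or_pos n with hn | hn
  · subst hn; simp
  refine ENNReal.le_of_forall_pos_le_add fun ε hε _ => ?_
  have hεr : (0:ℝ) < (ε:ℝ) := by exact_mod_cast hε
  have hnR : (0:ℝ) < (n:ℝ) := by exact_mod_cast hn
  set ρ : ℝ := ((ε:ℝ)/2)/(S.toReal+1) with hρ_def
  have hρ : 0 < ρ := by positivity
  set lam : ℝ := (1+ρ)⁻¹ with hlam_def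
  have h1ρ : (0:ℝ) < 1+ρ := by linarith
  have hlam : 0 < lam := by positivity
  have h1lam : 1 - lam = ρ/(1+ρ) := by
    rw [hlam_def]; field_simp; ring
  obtain ⟨E, hE, hEconv⟩ := hqu (((ε:ℝ)/2)/n) (by positivity)
  have hclaim : ∀ t : ℝ, 0 < t → H (ChoquetAux.lev G t) ≤ H E + M (lam*t) := by
    intro t ht
    have hpos : 0 < (1-lam)*t := by
      rw [h1lam]; positivity
    obtain ⟨k, hk⟩ := (Metric.tendstoUniformlyOn_iff.mp hEconv ((1-lam)*t) hpos).exists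
    have hsub : ChoquetAux.lev G t ⊆ E ∪ ChoquetAux.lev (P k) (lam*t) := by
      intro x hx
      by_cases hxE : x ∈ E
      · exact Or.inl hxE
      · right
        simp only [ChoquetAux.lev, mem_setOf_eq, hG] at hx ⊢
        have hFx : t < |F x| := (ENNReal.ofReal_lt_ofReal_iff_of_nonneg ht.le).mp hx
        have hdist := hk x hxE
        rw [Real.dist_eq] at hdist
        have habs : |F x| - |∑ m ∈ Finset.range (k+1), f m x|
            ≤ |F x - ∑ m ∈ Finset.range (k+1), f m x| := abs_sub_abs_le_abs_sub _ _
        have hexp : (1-lam)*t = t - lam*t := by ring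
        rw [hexp] at hdist
        have hSk : lam * t < |∑ m ∈ Finset.range (k+1), f m x| := by linarith
        calc ENNReal.ofReal (lam*t)
            < ENNReal.ofReal |∑ m ∈ Finset.range (k+1), f m x| := by
              rw [ENNReal.ofReal_lt_ofReal_iff (lt_trans (by positivity) hSk)]
              exact hSk
          _ ≤ P k x := by
              simp only [hP, hg]
              calc ENNReal.ofReal |∑ m ∈ Finset.range (k+1), f m x|
                  ≤ ENNReal.ofReal (∑ m ∈ Finset.range (k+1), |f m x|) :=
                    ENNReal.ofReal_le_ofReal (Finset.abs_sum_le_sum_abs _ _)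
                _ = ∑ m ∈ Finset.range (k+1), ENNReal.ofReal |f m x| :=
                    ENNReal.ofReal_sum_of_nonneg (fun i _ => abs_nonneg _)
    calc H (ChoquetAux.lev G t) ≤ H (E ∪ ChoquetAux.lev (P k) (lam*t)) := hmono hsub
      _ ≤ H E + H (ChoquetAux.lev (P k) (lam*t)) := ChoquetAux.finSub hssa _ _
      _ ≤ H E + M (lam*t) := by
          refine add_le_add_right ?_ _
          simp only [hM]
          exact le_iSup (fun k => H (ChoquetAux.lev (P k) (lam*t))) k
  calc ∫⁻ t in Ioc (0:ℝ) (n:ℝ), H (ChoquetAux.lev G t)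
      ≤ ∫⁻ t in Ioc (0:ℝ) (n:ℝ), (H E + M (lam*t)) :=
        setLIntegral_mono (measurable_const.add (hMmeas.comp (measurable_const_mul lam)))
          (fun t ht => hclaim t ht.1)
    _ = H E * volume (Ioc (0:ℝ) (n:ℝ)) + ∫⁻ t in Ioc (0:ℝ) (n:ℝ), M (lam*t) := by
        rw [lintegral_add_left measurable_const, setLIntegral_const]
    _ ≤ ENNReal.ofReal ((ε:ℝ)/2) + (S + ENNReal.ofReal ((ε:ℝ)/2)) := by
        refine add_le_add ?_ ?_
        · rw [Real.volume_Ioc, sub_zero]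
          calc H E * ENNReal.ofReal (n:ℝ)
              ≤ ENNReal.ofReal (((ε:ℝ)/2)/n) * ENNReal.ofReal (n:ℝ) :=
                mul_le_mul_left hE _
            _ = ENNReal.ofReal ((ε:ℝ)/2) := by
                rw [← ENNReal.ofReal_mul (by positivity)]
                rw [div_mul_cancel₀ _ (ne_of_gt hnR)]
        · calc ∫⁻ t in Ioc (0:ℝ) (n:ℝ), M (lam*t)
              = ENNReal.ofReal lam⁻¹ * ∫⁻ s in Ioc (0:ℝ) (lam*(n:ℝ)), M s :=
                ChoquetAux.lint_scale M hMmeas hlam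
            _ ≤ ENNReal.ofReal lam⁻¹ * ∫⁻ s in Ioi (0:ℝ), M s :=
                mul_le_mul_right (lintegral_mono_set Ioc_subset_Ioi_self) _
            _ ≤ ENNReal.ofReal (1+ρ) * S := by
                rw [hlam_def, inv_inv]
                exact mul_le_mul_right hMint _
            _ ≤ S + ENNReal.ofReal ((ε:ℝ)/2) := by
                have hres := ChoquetAux.ofReal_one_add_mul_le hS
                  (show (0:ℝ) < (ε:ℝ)/2 by positivity)
                rwa [← hρ_def] at hres
    _ = S + ↑ε := by
        rw [add_comm, add_assoc, ← ENNReal.ofReal_add (by positivity) (by positivity)]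
        norm_num [ENNReal.ofReal_coe_nnreal]
end
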